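/- arXiv:math/0703045 — 3 statements merged into one kernel-verified Lean document; each statement's English description precedes it below -/
import Mathlib

section
/- For every set B ⊆ 𝔠 (of cardinality < κ̄): q_B is a ⊆-maximal element of R_B; moreover G_B = ⋂{G_q : q ∈ R_B} = ⋂{G_q : q ∈ R_B and q is countable}, and G_B is the ⊆-minimal element of {G_q : q ∈ R_B}. Also q_B = ⋃{q_{b̄} : b̄ ∈ ^{ω≥}B} = ⋃{q ∈ R_B : q countable}. -/
open FirstOrder Cardinal Set

universe u

namespace Paper886

section Basic

variable (L : FirstOrder.Language.{u, u}) (M : Type u) [L.Structure M]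

/-- A first-order formula in `n` object variables together with a finite tuple of
parameters from `M`. -/
structure ParamFormula (n : ℕ) : Type u where
  m : ℕ
  toFormula : L.Formula (Fin n ⊕ Fin m)
  params : Fin m → M

variable {L M}

/-- Realization of a parametrized formula at a tuple. -/
def ParamFormula.Realize {n : ℕ} (f : ParamFormula L M n) (v : Fin n → M) : Prop :=
  f.toFormula.Realize (Sum.elim v f.params)

/-- The parameters of `f` all lie in `B`. -/
def ParamFormula.paramsIn {n : ℕ} (f : ParamFormula L M n) (B : Set M) : Prop :=
  ∀ i, f.params i ∈ B

/-- The set of realizations of a partial 1-type. -/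
def realizeSet (p : Set (ParamFormula L M 1)) : Set M :=
  {a | ∀ f ∈ p, f.Realize fun _ => a}

/-- The partial type `p` is over the parameter set `B`. -/
def IsTypeOver (p : Set (ParamFormula L M 1)) (B : Set M) : Prop :=
  ∀ f ∈ p, f.paramsIn B

variable (L) in
/-- Two tuples realize the same type over a set `A` of parameters. -/
def SameType {α : Type u} (A : Set M) (a b : α → M) : Prop :=
  ∀ (n mp : ℕ) (φ : L.Formula (Fin n ⊕ Fin mp)) (vs : Fin n → α) (ps : Fin mp → M),
    (∀ i, ps i ∈ A) →
      (φ.Realize (Sum.elim (fun i => a (vs i)) ps) ↔ φ.Realize (Sum.elim (fun i => b (vs i)) ps))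

variable (L M)

/-- `M` is `κ`-saturated: every finitely satisfiable 1-type over fewer than `κ`
parameters is realized in `M`. -/
def Saturated (κ : Cardinal.{u}) : Prop :=
  ∀ B : Set M, #B < κ → ∀ p : Set (ParamFormula L M 1), IsTypeOver p B →
    (∀ s : Set (ParamFormula L M 1), s ⊆ p → s.Finite → ∃ a : M, ∀ f ∈ s, f.Realize fun _ => a) →
    ∃ a : M, a ∈ realizeSet p

/-- `Th(M)` is dependent (NIP): no formula has the independence property, where consistency
of a pattern is rendered as finite satisfiability in the (saturated) monster. -/
def IsDependent : Prop :=
  ∀ (nx np : ℕ) (φ : L.Formula (Fin nx ⊕ Fin np)) (a : ℕ → Fin np → M),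
    ¬ ∀ (u : Set ℕ) (s : Finset ℕ), ∃ x : Fin nx → M,
        ∀ i ∈ s, (φ.Realize (Sum.elim x (a i)) ↔ i ∈ u)

variable {L M}

/-- The cardinality `|T|` of the (complete) theory of `M`. -/
noncomputable def theoryCard (L : FirstOrder.Language.{u, u}) : Cardinal.{u} :=
  ℵ₀ ⊔ L.card

variable (L M)

/-- A type-definable group: a partial type `p*` over `A*` together with definitions
(over `A*`) of the group operations making `p*(𝔠)` a group. -/
structure DefGroup : Type u where
  AStar : Set M
  pStar : Set (ParamFormula L M 1)
  pStar_over : IsTypeOver pStar AStar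
  mul : M → M → M
  inv : M → M
  one : M
  mul_definable : ∃ φ : ParamFormula L M 3, φ.paramsIn AStar ∧
    ∀ x y z : M, (φ.Realize ![x, y, z] ↔ mul x y = z)
  inv_definable : ∃ φ : ParamFormula L M 2, φ.paramsIn AStar ∧
    ∀ x y : M, (φ.Realize ![x, y] ↔ inv x = y)
  one_definable : ∃ φ : ParamFormula L M 1, φ.paramsIn AStar ∧
    ∀ x : M, (φ.Realize ![x] ↔ x = one)
  one_mem' : one ∈ realizeSet pStar
  mul_mem' : ∀ x ∈ realizeSet pStar, ∀ y ∈ realizeSet pStar, mul x y ∈ realizeSet pStar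
  inv_mem' : ∀ x ∈ realizeSet pStar, inv x ∈ realizeSet pStar
  mul_assoc' : ∀ x ∈ realizeSet pStar, ∀ y ∈ realizeSet pStar, ∀ z ∈ realizeSet pStar,
    mul (mul x y) z = mul x (mul y z)
  one_mul' : ∀ x ∈ realizeSet pStar, mul one x = x
  mul_one' : ∀ x ∈ realizeSet pStar, mul x one = x
  inv_mul' : ∀ x ∈ realizeSet pStar, mul (inv x) x = one
  mul_inv' : ∀ x ∈ realizeSet pStar, mul x (inv x) = one

variable {L M}

namespace DefGroup

variable (D : DefGroup L M)

/-- The underlying set of the group `G = p*(𝔠)`. -/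
def carrier : Set M := realizeSet D.pStar

/-- `G` is abelian. -/
def IsAbelian : Prop := ∀ x ∈ D.carrier, ∀ y ∈ D.carrier, D.mul x y = D.mul y x

/-- `H` is a subgroup of `G`. -/
def IsSubgroup (H : Set M) : Prop :=
  H ⊆ D.carrier ∧ D.one ∈ H ∧ (∀ x ∈ H, ∀ y ∈ H, D.mul x y ∈ H) ∧ ∀ x ∈ H, D.inv x ∈ H

/-- `(G : H) ≤ c`: at most `c` left cosets of `H` cover `G`. -/
def indexLE (H : Set M) (c : Cardinal.{u}) : Prop :=
  ∃ S : Set M, S ⊆ D.carrier ∧ #S ≤ c ∧ ∀ g ∈ D.carrier, ∃ s ∈ S, D.mul (D.inv s) g ∈ H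

/-- `(G : H) < c`: fewer than `c` left cosets of `H` cover `G`. -/
def indexLT (H : Set M) (c : Cardinal.{u}) : Prop :=
  ∃ S : Set M, S ⊆ D.carrier ∧ #S < c ∧ ∀ g ∈ D.carrier, ∃ s ∈ S, D.mul (D.inv s) g ∈ H

/-- The realization set of the partial type `q^n_Γ`. -/
def qSet (Γ : Set (ParamFormula L M 1)) (n : ℕ) : Set M :=
  {c | ∃ d : Fin n → M × M,
    (∀ ℓ, (d ℓ).1 ∈ D.carrier ∧ (d ℓ).2 ∈ D.carrier) ∧
    (∀ ℓ, ∀ f ∈ Γ, (f.Realize fun _ => (d ℓ).1) ↔ (f.Realize fun _ => (d ℓ).2)) ∧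
    c = (List.ofFn fun ℓ => D.mul (D.inv (d ℓ).1) (d ℓ).2).foldr D.mul D.one}

/-- The realization set of `q^n_{ā}`, i.e. `q^n_{Γ_ā}` where `Γ_ā` consists of all
formulas with parameters in the range of `ā`. -/
def qTupleSet {α : Type u} (a : α → M) (n : ℕ) : Set M :=
  D.qSet {f : ParamFormula L M 1 | f.paramsIn (Set.range a)} n

end DefGroup

end Basic

variable {L : FirstOrder.Language.{u, u}} {M : Type u} [L.Structure M]

variable (L) in
/-- `X` is the union of fewer than `κ` realization sets of types over `B`. -/
def UnionTypeDefOver (X B : Set M) (κ : Cardinal.{u}) : Prop :=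
  ∃ ι : Type u, #ι < κ ∧ ∃ P : ι → Set (ParamFormula L M 1),
    (∀ i, IsTypeOver (P i) B) ∧ X = ⋃ i, realizeSet (P i)

variable (L) in
/-- `X` is union-type-definable (with fewer than `κ` parameters altogether). -/
def UnionTypeDefinable (X : Set M) (κ : Cardinal.{u}) : Prop :=
  ∃ B : Set M, #B < κ ∧ UnionTypeDefOver L X B κ

/-- `G_q = (p* ∪ q)(𝔠)`. -/
def Gq (D : DefGroup L M) (q : Set (ParamFormula L M 1)) : Set M :=
  realizeSet (D.pStar ∪ q)

/-- `R_B`: the family of 1-types `q` over `B` such that `G_q` is a subgroup of `G`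
of index `< κ`. -/
def RB (D : DefGroup L M) (κ : Cardinal.{u}) (B : Set M) : Set (Set (ParamFormula L M 1)) :=
  {q | IsTypeOver q B ∧ D.IsSubgroup (Gq D q) ∧ D.indexLT (Gq D q) κ}

/-- `q_B`, the union of all members of `R_B`. -/
def qB (D : DefGroup L M) (κ : Cardinal.{u}) (B : Set M) : Set (ParamFormula L M 1) :=
  ⋃₀ RB D κ B

/-- `G_B = q_B(𝔠) ∩ G`. -/
def GB (D : DefGroup L M) (κ : Cardinal.{u}) (B : Set M) : Set M :=
  realizeSet (qB D κ B) ∩ D.carrier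

/-- The complete type of `a` over `A` (as the set of all param-formulas over `A`
satisfied by `a`). -/
def typeOf (A : Set M) (a : M) : Set (ParamFormula L M 1) :=
  {f | f.paramsIn A ∧ f.Realize fun _ => a}

/-- `φ(x̄, ȳ₀, …, ȳ_{k-1})` is `k`-independent: for every index set of size `< κ` there is
an array of parameter tuples such that every pattern on `^k ι` is (finitely) satisfiable. -/
def FormulaKIndep (M : Type u) [L.Structure M] (κ : Cardinal.{u}) (k nx : ℕ) (ny : Fin k → ℕ)
    (φ : L.Formula (Fin nx ⊕ ((ℓ : Fin k) × Fin (ny ℓ)))) : Prop :=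
  ∀ ι : Type u, #ι < κ →
    ∃ a : (ℓ : Fin k) → ι → Fin (ny ℓ) → M,
      ∀ (u : Set (Fin k → ι)) (s : Finset (Fin k → ι)),
        ∃ x : Fin nx → M,
          ∀ η ∈ s, ((φ.Realize (Sum.elim x fun p => a p.1 (η p.1) p.2)) ↔ η ∈ u)

/-- `Th(M)` is `k`-independent. -/
def KIndependent (L : FirstOrder.Language.{u, u}) (M : Type u) [L.Structure M] (κ : Cardinal.{u})
    (k : ℕ) : Prop :=
  ∃ (nx : ℕ) (ny : Fin k → ℕ) (φ : L.Formula (Fin nx ⊕ ((ℓ : Fin k) × Fin (ny ℓ)))),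
    FormulaKIndep M κ k nx ny φ

/-- `Th(M)` is `k`-dependent. -/
def KDependent (L : FirstOrder.Language.{u, u}) (M : Type u) [L.Structure M] (κ : Cardinal.{u})
    (k : ℕ) : Prop :=
  ¬ KIndependent L M κ k

/-! ### Auxiliary development -/

section Aux
set_option linter.unusedSectionVars false

variable {L : FirstOrder.Language.{u, u}} {M : Type u} [L.Structure M]

namespace ParamFormula

/-- Realization only depends on the valuation extensionally (it's a function, so trivial). -/
lemma realize_congr {n : ℕ} (f : ParamFormula L M n) {v w : Fin n → M} (h : ∀ i, v i = w i) :
    f.Realize v ↔ f.Realize w := by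
  rw [show v = w from funext h]

/-- Negation of a parametrized formula. -/
protected def pnot {n : ℕ} (f : ParamFormula L M n) : ParamFormula L M n :=
  ⟨f.m, f.toFormula.not, f.params⟩

@[simp] lemma realize_pnot {n : ℕ} (f : ParamFormula L M n) (v : Fin n → M) :
    f.pnot.Realize v ↔ ¬ f.Realize v := by
  simp [ParamFormula.pnot, ParamFormula.Realize, Language.Formula.realize_not]

lemma paramsIn_pnot {n : ℕ} {f : ParamFormula L M n} {S : Set M} (h : f.paramsIn S) :
    f.pnot.paramsIn S := h

/-- Conjunction of two parametrized formulas. -/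
protected def pand {n : ℕ} (f g : ParamFormula L M n) : ParamFormula L M n where
  m := f.m + g.m
  toFormula := (f.toFormula.relabel (Sum.map id (Fin.castAdd g.m))) ⊓
      (g.toFormula.relabel (Sum.map id (Fin.natAdd f.m)))
  params := Fin.append f.params g.params

@[simp] lemma realize_pand {n : ℕ} (f g : ParamFormula L M n) (v : Fin n → M) :
    (f.pand g).Realize v ↔ f.Realize v ∧ g.Realize v := by
  have h1 : (Sum.elim v (Fin.append f.params g.params)) ∘ Sum.map id (Fin.castAdd g.m) =
      Sum.elim v f.params := by
    funext x; cases x with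
    | inl i => rfl
    | inr j => simp [Fin.append_left]
  have h2 : (Sum.elim v (Fin.append f.params g.params)) ∘ Sum.map id (Fin.natAdd f.m) =
      Sum.elim v g.params := by
    funext x; cases x with
    | inl i => rfl
    | inr j => simp [Fin.append_right]
  simp only [ParamFormula.pand, ParamFormula.Realize, Language.Formula.realize_inf,
    Language.Formula.realize_relabel, h1, h2]

lemma paramsIn_pand {n : ℕ} {f g : ParamFormula L M n} {S : Set M}
    (hf : f.paramsIn S) (hg : g.paramsIn S) : (f.pand g).paramsIn S := by
  intro i
  refine Fin.addCases (motive := fun i => (f.pand g).params i ∈ S) ?_ ?_ i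
  · intro j; simpa [ParamFormula.pand, Fin.append_left] using hf j
  · intro j; simpa [ParamFormula.pand, Fin.append_right] using hg j

/-- The `true` parametrized formula. -/
protected def ptrue {n : ℕ} : ParamFormula L M n := ⟨0, ⊤, Fin.elim0⟩

@[simp] lemma realize_ptrue {n : ℕ} (v : Fin n → M) :
    (ParamFormula.ptrue : ParamFormula L M n).Realize v := by
  simp [ParamFormula.ptrue, ParamFormula.Realize]

lemma paramsIn_ptrue {n : ℕ} (S : Set M) :
    (ParamFormula.ptrue : ParamFormula L M n).paramsIn S := fun i => i.elim0

/-- Conjunction of a list of parametrized formulas. -/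
def pandList {n : ℕ} : List (ParamFormula L M n) → ParamFormula L M n
  | [] => ParamFormula.ptrue
  | f :: l => f.pand (pandList l)

@[simp] lemma realize_pandList {n : ℕ} (l : List (ParamFormula L M n)) (v : Fin n → M) :
    (pandList l).Realize v ↔ ∀ f ∈ l, f.Realize v := by
  induction l with
  | nil => simp [pandList]
  | cons f l ih => simp [pandList, ih]

lemma paramsIn_pandList {n : ℕ} {l : List (ParamFormula L M n)} {S : Set M}
    (h : ∀ f ∈ l, f.paramsIn S) : (pandList l).paramsIn S := by
  induction l with
  | nil => exact paramsIn_ptrue S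
  | cons f l ih =>
      exact paramsIn_pand (h f (by simp)) (ih fun f hf => h f (by simp [hf]))

/-- Relabelling of the object variables. -/
protected def relabelVars {k n : ℕ} (ρ : Fin k → Fin n) (f : ParamFormula L M k) :
    ParamFormula L M n :=
  ⟨f.m, f.toFormula.relabel (Sum.map ρ id), f.params⟩

@[simp] lemma realize_relabelVars {k n : ℕ} (ρ : Fin k → Fin n) (f : ParamFormula L M k)
    (v : Fin n → M) : (f.relabelVars ρ).Realize v ↔ f.Realize (v ∘ ρ) := by
  have h : (Sum.elim v f.params) ∘ Sum.map ρ id = Sum.elim (v ∘ ρ) f.params := by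
    funext x; cases x <;> rfl
  simp only [ParamFormula.relabelVars, ParamFormula.Realize, Language.Formula.realize_relabel, h]

lemma paramsIn_relabelVars {k n : ℕ} {ρ : Fin k → Fin n} {f : ParamFormula L M k} {S : Set M}
    (h : f.paramsIn S) : (f.relabelVars ρ).paramsIn S := h

/-- Existential quantification over the last object variable. -/
protected def exElim {n : ℕ} (f : ParamFormula L M (n + 1)) : ParamFormula L M n :=
  ⟨f.m,
    (FirstOrder.Language.BoundedFormula.relabel
      (Sum.elim
        (fun i : Fin (n + 1) =>
          Fin.lastCases (Sum.inr (0 : Fin 1)) (fun j => Sum.inl (Sum.inl j)) i)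
        (fun j : Fin f.m => Sum.inl (Sum.inr j)))
      f.toFormula).ex,
    f.params⟩

@[simp] lemma realize_exElim {n : ℕ} (f : ParamFormula L M (n + 1)) (v : Fin n → M) :
    f.exElim.Realize v ↔ ∃ a : M, f.Realize (Fin.snoc v a) := by
  simp only [ParamFormula.exElim, ParamFormula.Realize, Language.Formula.Realize,
    Language.BoundedFormula.realize_ex, Language.BoundedFormula.realize_relabel]
  refine exists_congr fun a => ?_
  have hval : (Sum.elim (Sum.elim v f.params)
        ((Fin.snoc (default : Fin 0 → M) a : Fin 1 → M) ∘ Fin.castAdd 0)) ∘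
      (Sum.elim
        (fun i : Fin (n + 1) =>
          Fin.lastCases (Sum.inr (0 : Fin 1)) (fun j => Sum.inl (Sum.inl j)) i)
        (fun j : Fin f.m => Sum.inl (Sum.inr j))) =
      Sum.elim (Fin.snoc v a) f.params := by
    funext x
    cases x with
    | inl i =>
        refine Fin.lastCases ?_ (fun j => ?_) i
        · have h0 : (Fin.snoc (default : Fin 0 → M) a : Fin 1 → M) 0 = a :=
            Fin.snoc_last _ _
          simp [Fin.snoc_last, h0]
        · simp [Fin.snoc_castSucc]
    | inr j => rfl
  rw [hval]
  have hxs : ((Fin.snoc (default : Fin 0 → M) a : Fin 1 → M) ∘ Fin.natAdd 1) =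
      (default : Fin 0 → M) := funext fun i => i.elim0
  rw [hxs]

lemma paramsIn_exElim {n : ℕ} {f : ParamFormula L M (n + 1)} {S : Set M}
    (h : f.paramsIn S) : f.exElim.paramsIn S := h

/-- Substituting a parameter for the last object variable. -/
protected def substParam {n : ℕ} (a : M) (f : ParamFormula L M (n + 1)) : ParamFormula L M n :=
  ⟨f.m + 1,
    f.toFormula.relabel
      (Sum.elim
        (fun i : Fin (n + 1) =>
          Fin.lastCases (Sum.inr (Fin.last f.m)) (fun j => Sum.inl j) i)
        (fun j : Fin f.m => Sum.inr j.castSucc)),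
    Fin.snoc f.params a⟩

@[simp] lemma realize_substParam {n : ℕ} (a : M) (f : ParamFormula L M (n + 1))
    (v : Fin n → M) : (f.substParam a).Realize v ↔ f.Realize (Fin.snoc v a) := by
  have hval : (Sum.elim v (Fin.snoc f.params a : Fin (f.m + 1) → M)) ∘
      (Sum.elim
        (fun i : Fin (n + 1) =>
          Fin.lastCases (Sum.inr (Fin.last f.m)) (fun j => Sum.inl j) i)
        (fun j : Fin f.m => Sum.inr j.castSucc)) =
      Sum.elim (Fin.snoc v a) f.params := by
    funext x
    cases x with
    | inl i =>
        refine Fin.lastCases ?_ (fun j => ?_) i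
        · simp [Fin.snoc_last]
        · simp [Fin.snoc_castSucc]
    | inr j => simp [Fin.snoc_castSucc]
  simp only [ParamFormula.substParam, ParamFormula.Realize, Language.Formula.realize_relabel, hval]

lemma paramsIn_substParam {n : ℕ} {a : M} {f : ParamFormula L M (n + 1)} {S : Set M}
    (h : f.paramsIn S) (ha : a ∈ S) : (f.substParam a).paramsIn S := by
  intro i
  refine Fin.lastCases ?_ (fun j => ?_) i
  · simpa [ParamFormula.substParam, Fin.snoc_last] using ha
  · simpa [ParamFormula.substParam, Fin.snoc_castSucc] using h j

end ParamFormula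


section Forms

lemma snoc_one (v : Fin 1 → M) (b : M) : (Fin.snoc v b : Fin 2 → M) = ![v 0, b] := by
  funext i
  fin_cases i <;> (simp [Fin.snoc]; try rfl)

lemma snoc_two (v : Fin 2 → M) (c : M) : (Fin.snoc v c : Fin 3 → M) = ![v 0, v 1, c] := by
  funext i
  fin_cases i <;> (simp [Fin.snoc]; try rfl)

/-- The formula `∃ z (φmul(x, y, z) ∧ ¬ g(z))`, i.e. `¬ g(x · y)`. -/
def notMulForm (φmul : ParamFormula L M 3) (g : ParamFormula L M 1) : ParamFormula L M 2 :=
  ParamFormula.exElim (φmul.pand ((g.relabelVars (fun _ => 2)).pnot))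

lemma realize_notMulForm {mu : M → M → M} {φmul : ParamFormula L M 3}
    (hmul : ∀ x y z : M, φmul.Realize ![x, y, z] ↔ mu x y = z)
    (g : ParamFormula L M 1) (v : Fin 2 → M) :
    (notMulForm φmul g).Realize v ↔ ¬ g.Realize (fun _ => mu (v 0) (v 1)) := by
  simp only [notMulForm, ParamFormula.realize_exElim, ParamFormula.realize_pand,
    ParamFormula.realize_pnot, ParamFormula.realize_relabelVars]
  constructor
  · rintro ⟨c, h1, h2⟩
    have hc : mu (v 0) (v 1) = c := (hmul _ _ _).1 (by rwa [snoc_two] at h1)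
    rw [hc]
    intro hg
    have hcomp : ((Fin.snoc v c : Fin 3 → M) ∘ fun _ : Fin 1 => (2 : Fin 3)) =
        fun _ : Fin 1 => c := by funext i; simp [snoc_two]
    rw [hcomp] at h2
    exact h2 hg
  · intro h
    refine ⟨mu (v 0) (v 1), by rw [snoc_two]; exact (hmul _ _ _).2 rfl, ?_⟩
    have hcomp : ((Fin.snoc v (mu (v 0) (v 1)) : Fin 3 → M) ∘ fun _ : Fin 1 => (2 : Fin 3)) =
        fun _ : Fin 1 => mu (v 0) (v 1) := by funext i; simp [snoc_two]
    rw [hcomp]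
    exact h

lemma paramsIn_notMulForm {φmul : ParamFormula L M 3} {g : ParamFormula L M 1} {S : Set M}
    (h1 : φmul.paramsIn S) (h2 : g.paramsIn S) : (notMulForm φmul g).paramsIn S :=
  ParamFormula.paramsIn_exElim (ParamFormula.paramsIn_pand h1
    (ParamFormula.paramsIn_pnot (ParamFormula.paramsIn_relabelVars h2)))

/-- The formula `∃ y (⋀ F(y) ∧ ¬ g(x · y))`. -/
def thetaForm (φmul : ParamFormula L M 3) (g : ParamFormula L M 1)
    (F : List (ParamFormula L M 1)) : ParamFormula L M 1 :=
  ParamFormula.exElim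
    ((ParamFormula.pandList (F.map fun f => f.relabelVars fun _ => (1 : Fin 2))).pand
      (notMulForm φmul g))

lemma realize_thetaForm {mu : M → M → M} {φmul : ParamFormula L M 3}
    (hmul : ∀ x y z : M, φmul.Realize ![x, y, z] ↔ mu x y = z)
    (g : ParamFormula L M 1) (F : List (ParamFormula L M 1)) (v : Fin 1 → M) :
    (thetaForm φmul g F).Realize v ↔
      ∃ b : M, (∀ f ∈ F, f.Realize fun _ => b) ∧ ¬ g.Realize (fun _ => mu (v 0) b) := by
  simp only [thetaForm, ParamFormula.realize_exElim, ParamFormula.realize_pand,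
    ParamFormula.realize_pandList, List.mem_map, realize_notMulForm hmul]
  refine exists_congr fun b => ?_
  rw [snoc_one]
  have heq : ((![v 0, b] : Fin 2 → M) ∘ fun _ : Fin 1 => (1 : Fin 2)) = fun _ : Fin 1 => b := by
    funext i; simp
  constructor
  · rintro ⟨h1, h2⟩
    refine ⟨fun f hf => ?_, by simpa using h2⟩
    have h := h1 _ ⟨f, hf, rfl⟩
    rw [ParamFormula.realize_relabelVars, heq] at h
    exact h
  · rintro ⟨h1, h2⟩
    refine ⟨?_, by simpa using h2⟩
    rintro f' ⟨f, hf, rfl⟩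
    rw [ParamFormula.realize_relabelVars, heq]
    exact h1 f hf

lemma paramsIn_thetaForm {φmul : ParamFormula L M 3} {g : ParamFormula L M 1}
    {F : List (ParamFormula L M 1)} {S : Set M}
    (h1 : φmul.paramsIn S) (h2 : g.paramsIn S) (h3 : ∀ f ∈ F, f.paramsIn S) :
    (thetaForm φmul g F).paramsIn S := by
  refine ParamFormula.paramsIn_exElim (ParamFormula.paramsIn_pand ?_
    (paramsIn_notMulForm h1 h2))
  refine ParamFormula.paramsIn_pandList ?_
  intro f' hf'
  obtain ⟨f, hf, rfl⟩ := List.mem_map.1 hf'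
  exact ParamFormula.paramsIn_relabelVars (h3 f hf)

/-- The formula `¬ g(a · y)`, with `a` as a parameter. -/
def chiForm (φmul : ParamFormula L M 3) (g : ParamFormula L M 1) (a : M) :
    ParamFormula L M 1 :=
  ParamFormula.substParam a ((notMulForm φmul g).relabelVars ![1, 0])

lemma realize_chiForm {mu : M → M → M} {φmul : ParamFormula L M 3}
    (hmul : ∀ x y z : M, φmul.Realize ![x, y, z] ↔ mu x y = z)
    (g : ParamFormula L M 1) (a : M) (v : Fin 1 → M) :
    (chiForm φmul g a).Realize v ↔ ¬ g.Realize (fun _ => mu a (v 0)) := by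
  simp only [chiForm, ParamFormula.realize_substParam, ParamFormula.realize_relabelVars,
    realize_notMulForm hmul]
  rw [snoc_one]
  have heq1 : ((![v 0, a] : Fin 2 → M) ∘ (![1, 0] : Fin 2 → Fin 2)) 0 = a := by simp
  have heq2 : ((![v 0, a] : Fin 2 → M) ∘ (![1, 0] : Fin 2 → Fin 2)) 1 = v 0 := by simp
  rw [heq1, heq2]

lemma paramsIn_chiForm {φmul : ParamFormula L M 3} {g : ParamFormula L M 1} {a : M} {S : Set M}
    (h1 : φmul.paramsIn S) (h2 : g.paramsIn S) (ha : a ∈ S) :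
    (chiForm φmul g a).paramsIn S :=
  ParamFormula.paramsIn_substParam
    (ParamFormula.paramsIn_relabelVars (paramsIn_notMulForm h1 h2)) ha

/-- The formula `∃ z (φinv(x, z) ∧ ¬ g(z))`, i.e. `¬ g(x⁻¹)`. -/
def notInvForm (φinv : ParamFormula L M 2) (g : ParamFormula L M 1) : ParamFormula L M 1 :=
  ParamFormula.exElim (φinv.pand ((g.relabelVars fun _ => 1).pnot))

lemma realize_notInvForm {iv : M → M} {φinv : ParamFormula L M 2}
    (hinv : ∀ x y : M, φinv.Realize ![x, y] ↔ iv x = y)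
    (g : ParamFormula L M 1) (v : Fin 1 → M) :
    (notInvForm φinv g).Realize v ↔ ¬ g.Realize (fun _ => iv (v 0)) := by
  simp only [notInvForm, ParamFormula.realize_exElim, ParamFormula.realize_pand,
    ParamFormula.realize_pnot, ParamFormula.realize_relabelVars]
  constructor
  · rintro ⟨c, h1, h2⟩
    have hc : iv (v 0) = c := (hinv _ _).1 (by rwa [snoc_one] at h1)
    rw [hc]
    intro hg
    have hcomp : ((Fin.snoc v c : Fin 2 → M) ∘ fun _ : Fin 1 => (1 : Fin 2)) =
        fun _ : Fin 1 => c := by funext i; simp [snoc_one]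
    rw [hcomp] at h2
    exact h2 hg
  · intro h
    refine ⟨iv (v 0), by rw [snoc_one]; exact (hinv _ _).2 rfl, ?_⟩
    have hcomp : ((Fin.snoc v (iv (v 0)) : Fin 2 → M) ∘ fun _ : Fin 1 => (1 : Fin 2)) =
        fun _ : Fin 1 => iv (v 0) := by funext i; simp [snoc_one]
    rw [hcomp]
    exact h

lemma paramsIn_notInvForm {φinv : ParamFormula L M 2} {g : ParamFormula L M 1} {S : Set M}
    (h1 : φinv.paramsIn S) (h2 : g.paramsIn S) : (notInvForm φinv g).paramsIn S :=
  ParamFormula.paramsIn_exElim (ParamFormula.paramsIn_pand h1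
    (ParamFormula.paramsIn_pnot (ParamFormula.paramsIn_relabelVars h2)))

end Forms

section SetAlg

lemma realizeSet_antitone {p q : Set (ParamFormula L M 1)} (h : p ⊆ q) :
    realizeSet q ⊆ realizeSet p := fun a ha f hf => ha f (h hf)

lemma realizeSet_union (p q : Set (ParamFormula L M 1)) :
    realizeSet (p ∪ q) = realizeSet p ∩ realizeSet q := by
  ext a
  constructor
  · intro ha
    exact ⟨fun f hf => ha f (Or.inl hf), fun f hf => ha f (Or.inr hf)⟩
  · rintro ⟨h1, h2⟩ f (hf | hf)
    · exact h1 f hf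
    · exact h2 f hf

lemma realizeSet_union_sUnion (p : Set (ParamFormula L M 1))
    (S : Set (Set (ParamFormula L M 1))) (hne : S.Nonempty) :
    realizeSet (p ∪ ⋃₀ S) = ⋂ q ∈ S, realizeSet (p ∪ q) := by
  ext a
  simp only [Set.mem_iInter]
  constructor
  · intro ha q hq f hf
    rcases hf with hf | hf
    · exact ha f (Or.inl hf)
    · exact ha f (Or.inr ⟨q, hq, hf⟩)
  · intro ha f hf
    rcases hf with hf | hf
    · obtain ⟨q0, hq0⟩ := hne
      exact ha q0 hq0 f (Or.inl hf)
    · obtain ⟨q, hq, hfq⟩ := hf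
      exact ha q hq f (Or.inr hfq)

end SetAlg

section GroupStuff

variable (D : DefGroup L M)

/-- The carrier of the type-definable group, as a type. -/
abbrev GC : Type u := {x : M // x ∈ D.carrier}

instance : Mul (GC D) := ⟨fun a b => ⟨D.mul a.1 b.1, D.mul_mem' _ a.2 _ b.2⟩⟩
instance : One (GC D) := ⟨⟨D.one, D.one_mem'⟩⟩
instance : Inv (GC D) := ⟨fun a => ⟨D.inv a.1, D.inv_mem' _ a.2⟩⟩

noncomputable instance : Group (GC D) :=
  Group.ofLeftAxioms
    (fun a b c => Subtype.ext (D.mul_assoc' _ a.2 _ b.2 _ c.2))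
    (fun a => Subtype.ext (D.one_mul' _ a.2))
    (fun a => Subtype.ext (D.inv_mul' _ a.2))

/-- An abstract subgroup of `G` as a `Subgroup` of the carrier type. -/
def toSubgroup {H : Set M} (hH : D.IsSubgroup H) : Subgroup (GC D) where
  carrier := {a : GC D | a.1 ∈ H}
  one_mem' := hH.2.1
  mul_mem' := fun ha hb => hH.2.2.1 _ ha _ hb
  inv_mem' := fun ha => hH.2.2.2 _ ha

lemma mem_toSubgroup {H : Set M} (hH : D.IsSubgroup H) (a : GC D) :
    a ∈ toSubgroup D hH ↔ a.1 ∈ H := Iff.rfl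

lemma quot_card_lt_of_indexLT {κ : Cardinal.{u}} {H : Set M} (hH : D.IsSubgroup H)
    (hidx : D.indexLT H κ) : #(GC D ⧸ toSubgroup D hH) < κ := by
  obtain ⟨S, hS1, hS2, hS3⟩ := hidx
  refine lt_of_le_of_lt ?_ hS2
  have hsurj : Function.Surjective
      (fun s : ↥S => (QuotientGroup.mk ⟨s.1, hS1 s.2⟩ : GC D ⧸ toSubgroup D hH)) := by
    intro c
    refine Quotient.inductionOn' c fun g => ?_
    obtain ⟨s, hsS, hsg⟩ := hS3 g.1 g.2
    refine ⟨⟨s, hsS⟩, ?_⟩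
    have hmem : ((⟨s, hS1 hsS⟩ : GC D)⁻¹ * g) ∈ toSubgroup D hH := hsg
    exact (QuotientGroup.eq).2 hmem
  exact Cardinal.mk_le_of_surjective hsurj

/-- Coset representatives for an intersection of fewer than `κ` subgroups of index `< κ`. -/
lemma indexLT_of_family {κ : Cardinal.{u}} (hreg : κ.IsRegular) (hsl : κ.IsStrongLimit)
    (hℵ : ℵ₀ < κ) {ι : Type u} (hι : #ι < κ) (Hf : ι → Set M)
    (hsub : ∀ i, D.IsSubgroup (Hf i)) (hidx : ∀ i, D.indexLT (Hf i) κ) :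
    ∃ S : Set M, S ⊆ D.carrier ∧ #S < κ ∧
      ∀ g ∈ D.carrier, ∃ s ∈ S, ∀ i, D.mul (D.inv s) g ∈ Hf i := by
  classical
  let N : Subgroup (GC D) := ⨅ i, toSubgroup D (hsub i)
  have hquotN : #(GC D ⧸ N) < κ := by
    let F : (GC D ⧸ N) → ∀ i, GC D ⧸ toSubgroup D (hsub i) := fun c i =>
      Quotient.map' id (fun a b hab => by
        rw [QuotientGroup.leftRel_apply] at hab ⊢
        exact Subgroup.mem_iInf.1 hab i) c
    have hFinj : Function.Injective F := by
      intro c d h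
      refine Quotient.inductionOn₂' c d (fun a b h => ?_) h
      have hab : ∀ i, (a⁻¹ * b) ∈ toSubgroup D (hsub i) := by
        intro i
        have hi := congrFun h i
        simp only [F, Quotient.map'_mk''] at hi
        rw [← QuotientGroup.leftRel_apply]
        exact Quotient.exact' hi
      exact Quotient.sound' (QuotientGroup.leftRel_apply.2 (Subgroup.mem_iInf.2 hab))
    have h1 : #(GC D ⧸ N) ≤ Cardinal.prod fun i => #(GC D ⧸ toSubgroup D (hsub i)) := by
      rw [← Cardinal.mk_pi]
      exact Cardinal.mk_le_of_injective hFinj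
    have hlt : ∀ i, #(GC D ⧸ toSubgroup D (hsub i)) < κ := fun i =>
      quot_card_lt_of_indexLT D (hsub i) (hidx i)
    have hcκ : (⨆ i, #(GC D ⧸ toSubgroup D (hsub i))) < κ :=
      Cardinal.iSup_lt_of_isRegular hreg hι hlt
    have h2 : (Cardinal.prod fun i => #(GC D ⧸ toSubgroup D (hsub i))) ≤
        (⨆ i, #(GC D ⧸ toSubgroup D (hsub i))) ^ #ι := by
      rw [← Cardinal.prod_const']
      exact Cardinal.prod_le_prod _ _ fun i => le_ciSup (Cardinal.bddAbove_range _) i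
    have h3 : (⨆ i, #(GC D ⧸ toSubgroup D (hsub i))) ^ #ι < κ := by
      calc (⨆ i, #(GC D ⧸ toSubgroup D (hsub i))) ^ #ι
          ≤ (2 ^ ⨆ i, #(GC D ⧸ toSubgroup D (hsub i))) ^ #ι :=
            Cardinal.power_le_power_right (Cardinal.cantor _).le
        _ = 2 ^ ((⨆ i, #(GC D ⧸ toSubgroup D (hsub i))) * #ι) := by
            rw [← Cardinal.power_mul]
        _ < κ := hsl.two_power_lt (Cardinal.mul_lt_of_lt hℵ.le hcκ hι)
    exact h1.trans_lt (h2.trans_lt h3)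
  refine ⟨Set.range fun c : GC D ⧸ N => ((Quotient.out c : GC D) : M), ?_, ?_, ?_⟩
  · rintro x ⟨c, rfl⟩
    exact (Quotient.out c).2
  · exact Cardinal.mk_range_le.trans_lt hquotN
  · intro g hg
    refine ⟨((Quotient.out (QuotientGroup.mk ⟨g, hg⟩ : GC D ⧸ N) : GC D) : M),
      ⟨QuotientGroup.mk ⟨g, hg⟩, rfl⟩, ?_⟩
    have hmk : (QuotientGroup.mk (Quotient.out (QuotientGroup.mk ⟨g, hg⟩ : GC D ⧸ N)) :
        GC D ⧸ N) = QuotientGroup.mk ⟨g, hg⟩ := Quotient.out_eq' _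
    have hmem : ((Quotient.out (QuotientGroup.mk ⟨g, hg⟩ : GC D ⧸ N))⁻¹ *
        (⟨g, hg⟩ : GC D)) ∈ N := QuotientGroup.eq.1 hmk
    intro i
    exact Subgroup.mem_iInf.1 hmem i

end GroupStuff

section CardStuff

lemma arrow_card_lt {κ : Cardinal.{u}} (hℵ : ℵ₀ < κ) {X : Type u} (hX : #X < κ) (m : ℕ) :
    #(Fin m → X) < κ := by
  induction m with
  | zero =>
      have hsub : Subsingleton (Fin 0 → X) := ⟨fun a b => funext fun i => i.elim0⟩
      have h1 : #(Fin 0 → X) ≤ 1 := Cardinal.le_one_iff_subsingleton.2 hsub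
      exact h1.trans_lt (Cardinal.one_lt_aleph0.trans hℵ)
  | succ m ih =>
      have he : #(Fin (m + 1) → X) = #(X × (Fin m → X)) :=
        Cardinal.mk_congr (Fin.consEquiv fun _ : Fin (m + 1) => X).symm
      rw [he, Cardinal.mk_prod, Cardinal.lift_id, Cardinal.lift_id]
      exact Cardinal.mul_lt_of_lt hℵ.le hX ih

lemma formula_card_lt {L : FirstOrder.Language.{u, u}} {κ : Cardinal.{u}} (hℵ : ℵ₀ < κ)
    (hT : theoryCard L < κ) (n m : ℕ) : #(L.Formula (Fin n ⊕ Fin m)) < κ := by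
  have h1 : #(L.Formula (Fin n ⊕ Fin m)) ≤ #(Σ k, L.BoundedFormula (Fin n ⊕ Fin m) k) :=
    Cardinal.mk_le_of_injective (f := Sigma.mk 0) sigma_mk_injective
  have h2 := Language.BoundedFormula.card_le (L := L) (α := Fin n ⊕ Fin m)
  have h3 : Cardinal.lift.{u} #(Fin n ⊕ Fin m) ≤ ℵ₀ := by
    have : #(Fin n ⊕ Fin m) < ℵ₀ := Cardinal.lt_aleph0_of_finite _
    exact le_of_lt (by rwa [Cardinal.lift_lt_aleph0])
  have hcard : Cardinal.lift.{0} L.card = L.card := Cardinal.lift_uzero _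
  have h4 : max ℵ₀ (Cardinal.lift.{u} #(Fin n ⊕ Fin m) + Cardinal.lift.{0} L.card) < κ := by
    rw [hcard]
    refine max_lt hℵ ?_
    have hc : L.card < κ := lt_of_le_of_lt (le_max_right ℵ₀ L.card)
      (by simpa [theoryCard] using hT)
    exact Cardinal.add_lt_of_lt hℵ.le (h3.trans_lt hℵ) hc
  exact lt_of_le_of_lt (h1.trans h2) h4

end CardStuff

section Claims

variable {D : DefGroup L M} {κ : Cardinal.{u}} {B : Set M}

lemma Gq_antitone {q q' : Set (ParamFormula L M 1)} (h : q ⊆ q') :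
    Gq D q' ⊆ Gq D q :=
  realizeSet_antitone (Set.union_subset_union_right _ h)

lemma Gq_subset_carrier (q : Set (ParamFormula L M 1)) : Gq D q ⊆ D.carrier :=
  realizeSet_antitone Set.subset_union_left

lemma empty_mem_RB (hℵ : ℵ₀ < κ) : (∅ : Set (ParamFormula L M 1)) ∈ RB D κ B := by
  have hGq : Gq D (∅ : Set (ParamFormula L M 1)) = D.carrier := by
    rw [Gq, Set.union_empty]; rfl
  refine ⟨fun f hf => hf.elim, ?_, ?_⟩
  · rw [DefGroup.IsSubgroup, hGq]
    exact ⟨subset_rfl, D.one_mem', D.mul_mem', D.inv_mem'⟩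
  · refine ⟨{D.one}, Set.singleton_subset_iff.2 D.one_mem', ?_, ?_⟩
    · rw [Cardinal.mk_singleton]
      exact Cardinal.one_lt_aleph0.trans hℵ
    · intro g hg
      refine ⟨D.one, rfl, ?_⟩
      rw [hGq]
      exact D.mul_mem' _ (D.inv_mem' _ D.one_mem') _ hg

lemma paramFormula_card_lt (hreg : κ.IsRegular) (hℵ : ℵ₀ < κ)
    (hT : theoryCard L < κ) (hB : #B < κ) :
    #{f : ParamFormula L M 1 | f.paramsIn B} < κ := by
  classical
  let T : Type u := Σ m : ULift.{u} ℕ, (L.Formula (Fin 1 ⊕ Fin m.down) × (Fin m.down → ↥B))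
  have hinj : Function.Injective (fun f : {f : ParamFormula L M 1 | f.paramsIn B} =>
      (⟨ULift.up f.1.m, f.1.toFormula, fun i => ⟨f.1.params i, f.2 i⟩⟩ : T)) := by
    rintro ⟨⟨m1, φ1, p1⟩, h1⟩ ⟨⟨m2, φ2, p2⟩, h2⟩ heq
    obtain ⟨hm, hrest⟩ := Sigma.mk.inj_iff.1 heq
    have hm' : m1 = m2 := congrArg ULift.down hm
    subst hm'
    rw [heq_iff_eq] at hrest
    obtain ⟨hφ, hp⟩ := Prod.ext_iff.1 hrest
    apply Subtype.ext
    show ParamFormula.mk m1 φ1 p1 = ParamFormula.mk m1 φ2 p2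
    subst hφ
    congr 1
    funext i
    exact congrArg Subtype.val (congrFun hp i)
  have hle : #{f : ParamFormula L M 1 | f.paramsIn B} ≤ #T :=
    Cardinal.mk_le_of_injective hinj
  refine hle.trans_lt ?_
  rw [show #T = Cardinal.sum fun m : ULift.{u} ℕ =>
      #(L.Formula (Fin 1 ⊕ Fin m.down) × (Fin m.down → ↥B)) from Cardinal.mk_sigma _]
  refine Cardinal.sum_lt_of_isRegular hreg (by simpa using hℵ) ?_
  intro m
  rw [Cardinal.mk_prod, Cardinal.lift_id, Cardinal.lift_id]
  exact Cardinal.mul_lt_of_lt hℵ.le (formula_card_lt hℵ hT 1 m.down) (arrow_card_lt hℵ hB m.down)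

lemma RB_card_lt (D : DefGroup L M) (hreg : κ.IsRegular) (hsl : κ.IsStrongLimit)
    (hℵ : ℵ₀ < κ) (hT : theoryCard L < κ) (hB : #B < κ) :
    #(RB D κ B) < κ := by
  classical
  let FB := {f : ParamFormula L M 1 | f.paramsIn B}
  have hinj : Function.Injective
      (fun q : ↥(RB D κ B) => ({f : ↥FB | f.1 ∈ q.1} : Set ↥FB)) := by
    rintro ⟨q1, hq1⟩ ⟨q2, hq2⟩ heq
    have h12 := Set.ext_iff.1 heq
    apply Subtype.ext
    ext f
    constructor
    · intro hf
      have hfB : f ∈ FB := fun i => hq1.1 f hf i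
      exact (h12 ⟨f, hfB⟩).1 hf
    · intro hf
      have hfB : f ∈ FB := fun i => hq2.1 f hf i
      exact (h12 ⟨f, hfB⟩).2 hf
  have hle : #(RB D κ B) ≤ #(Set ↥FB) := Cardinal.mk_le_of_injective hinj
  rw [Cardinal.mk_set] at hle
  exact hle.trans_lt (hsl.two_power_lt (paramFormula_card_lt hreg hℵ hT hB))

/-- Compactness claim for closure under multiplication. -/
lemma claimMul (hsat : Saturated L M κ) (hℵ : ℵ₀ < κ) (hA : #D.AStar < κ) (hB : #B < κ)
    {q : Set (ParamFormula L M 1)} (hqB : IsTypeOver q B)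
    {g : ParamFormula L M 1} (hgB : g.paramsIn B)
    (hg : ∀ x ∈ Gq D q, ∀ y ∈ Gq D q, g.Realize fun _ => D.mul x y) :
    ∃ F : List (ParamFormula L M 1), (∀ h ∈ F, h ∈ D.pStar ∪ q) ∧
      ∀ x ∈ realizeSet (D.pStar ∪ {h | h ∈ F}), ∀ y ∈ realizeSet (D.pStar ∪ {h | h ∈ F}),
        g.Realize fun _ => D.mul x y := by
  classical
  obtain ⟨φmul, hφmulA, hφmul⟩ := D.mul_definable
  by_contra hcon
  push_neg at hcon
  -- the set of "bad pair" formulas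
  set Θ : Set (ParamFormula L M 1) :=
    {h | ∃ F : List (ParamFormula L M 1), (∀ h' ∈ F, h' ∈ D.pStar ∪ q) ∧
      h = thetaForm φmul g F} with hΘ
  set p₁ : Set (ParamFormula L M 1) := (D.pStar ∪ q) ∪ Θ with hp₁
  have hcardAB : #(D.AStar ∪ B : Set M) < κ :=
    (Cardinal.mk_union_le _ _).trans_lt (Cardinal.add_lt_of_lt hℵ.le hA hB)
  have hp₁over : IsTypeOver p₁ (D.AStar ∪ B) := by
    rintro f (hf | hf)
    · rcases hf with hf | hf
      · exact fun i => Or.inl (D.pStar_over f hf i)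
      · exact fun i => Or.inr (hqB f hf i)
    · obtain ⟨F, hF, rfl⟩ := hf
      refine paramsIn_thetaForm (fun i => Or.inl (hφmulA i)) (fun i => Or.inr (hgB i)) ?_
      intro f hfF
      rcases hF f hfF with hf' | hf'
      · exact fun i => Or.inl (D.pStar_over f hf' i)
      · exact fun i => Or.inr (hqB f hf' i)
  have hfinsat : ∀ s : Set (ParamFormula L M 1), s ⊆ p₁ → s.Finite →
      ∃ a : M, ∀ f ∈ s, f.Realize fun _ => a := by
    intro s hs hsfin
    have h1 : (s ∩ (D.pStar ∪ q)).Finite := hsfin.inter_of_left _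
    have h2 : (s \ (D.pStar ∪ q)).Finite := hsfin.diff
    let FOf : ParamFormula L M 1 → List (ParamFormula L M 1) := fun h =>
      if hh : h ∈ Θ then hh.choose else []
    let Fbig : List (ParamFormula L M 1) :=
      h1.toFinset.toList ++ (h2.toFinset.toList.map FOf).flatten
    have hFbig : ∀ h ∈ Fbig, h ∈ D.pStar ∪ q := by
      intro h hh
      rcases List.mem_append.1 hh with hh | hh
      · have : h ∈ s ∩ (D.pStar ∪ q) := by
          simpa [Set.Finite.mem_toFinset] using hh
        exact this.2
      · obtain ⟨l, hl, hhl⟩ := List.mem_flatten.1 hh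
        obtain ⟨h', hh', rfl⟩ := List.mem_map.1 hl
        have hh'Θ : h' ∈ Θ := by
          have : h' ∈ s \ (D.pStar ∪ q) := by
            simpa [Set.Finite.mem_toFinset] using hh'
          rcases hs this.1 with h'' | h''
          · exact absurd h'' this.2
          · exact h''
        have hspec := hh'Θ.choose_spec
        rw [show FOf h' = hh'Θ.choose from dif_pos hh'Θ] at hhl
        exact hspec.1 h hhl
    obtain ⟨x, hx, y, hy, hnxy⟩ := hcon Fbig hFbig
    refine ⟨x, fun f hf => ?_⟩
    by_cases hfpq : f ∈ D.pStar ∪ q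
    · have hfFbig : f ∈ Fbig := by
        refine List.mem_append.2 (Or.inl ?_)
        simp [Set.Finite.mem_toFinset]
        exact ⟨hf, hfpq⟩
      exact hx f (Or.inr hfFbig)
    · have hfΘ : f ∈ Θ := by
        rcases hs hf with h'' | h''
        · exact absurd h'' hfpq
        · exact h''
      have hspec := hfΘ.choose_spec
      rw [hspec.2, realize_thetaForm hφmul]
      refine ⟨y, fun f' hf' => ?_, ?_⟩
      · have hf'Fbig : f' ∈ Fbig := by
          refine List.mem_append.2 (Or.inr ?_)
          refine List.mem_flatten.2 ⟨FOf f, ?_, ?_⟩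
          · exact List.mem_map.2 ⟨f,
              Finset.mem_toList.2 ((Set.Finite.mem_toFinset h2).2 ⟨hf, hfpq⟩), rfl⟩
          · rw [show FOf f = hfΘ.choose from dif_pos hfΘ]
            exact hf'
        exact hy f' (Or.inr hf'Fbig)
      · exact hnxy
  obtain ⟨a, ha⟩ := hsat (D.AStar ∪ B) hcardAB p₁ hp₁over hfinsat
  have haH : a ∈ Gq D q := fun f hf => ha f (Or.inl hf)
  -- second round
  set χ : ParamFormula L M 1 := chiForm φmul g a with hχ
  set p₂ : Set (ParamFormula L M 1) := (D.pStar ∪ q) ∪ {χ} with hp₂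
  have hcard2 : #((D.AStar ∪ B) ∪ {a} : Set M) < κ := by
    refine (Cardinal.mk_union_le _ _).trans_lt (Cardinal.add_lt_of_lt hℵ.le hcardAB ?_)
    rw [Cardinal.mk_singleton]
    exact Cardinal.one_lt_aleph0.trans hℵ
  have hp₂over : IsTypeOver p₂ ((D.AStar ∪ B) ∪ {a}) := by
    rintro f (hf | hf)
    · rcases hf with hf | hf
      · exact fun i => Or.inl (Or.inl (D.pStar_over f hf i))
      · exact fun i => Or.inl (Or.inr (hqB f hf i))
    · rw [Set.mem_singleton_iff] at hf
      subst hf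
      exact paramsIn_chiForm (fun i => Or.inl (Or.inl (hφmulA i)))
        (fun i => Or.inl (Or.inr (hgB i))) (Or.inr rfl)
  have hfinsat2 : ∀ s : Set (ParamFormula L M 1), s ⊆ p₂ → s.Finite →
      ∃ b : M, ∀ f ∈ s, f.Realize fun _ => b := by
    intro s hs hsfin
    have h1 : (s ∩ (D.pStar ∪ q)).Finite := hsfin.inter_of_left _
    set F : List (ParamFormula L M 1) := h1.toFinset.toList with hF
    have hFsub : ∀ h ∈ F, h ∈ D.pStar ∪ q := by
      intro h hh
      exact ((Set.Finite.mem_toFinset h1).1 (Finset.mem_toList.1 hh)).2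
    have hθ : (thetaForm φmul g F).Realize fun _ => a :=
      ha _ (Or.inr ⟨F, hFsub, rfl⟩)
    rw [realize_thetaForm hφmul] at hθ
    obtain ⟨b, hbF, hnab⟩ := hθ
    refine ⟨b, fun f hf => ?_⟩
    by_cases hfpq : f ∈ D.pStar ∪ q
    · exact hbF f (Finset.mem_toList.2 ((Set.Finite.mem_toFinset h1).2 ⟨hf, hfpq⟩))
    · have : f = χ := by
        rcases hs hf with h'' | h''
        · exact absurd h'' hfpq
        · exact h''
      subst this
      rw [hχ, realize_chiForm hφmul]
      exact hnab
  obtain ⟨b, hb⟩ := hsat ((D.AStar ∪ B) ∪ {a}) hcard2 p₂ hp₂over hfinsat2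
  have hbH : b ∈ Gq D q := fun f hf => hb f (Or.inl hf)
  have hbχ : χ.Realize fun _ => b := hb χ (Or.inr rfl)
  rw [hχ, realize_chiForm hφmul] at hbχ
  exact hbχ (hg a haH b hbH)

/-- Compactness claim for closure under inverse. -/
lemma claimInv (hsat : Saturated L M κ) (hℵ : ℵ₀ < κ) (hA : #D.AStar < κ) (hB : #B < κ)
    {q : Set (ParamFormula L M 1)} (hqB : IsTypeOver q B)
    {g : ParamFormula L M 1} (hgB : g.paramsIn B)
    (hg : ∀ x ∈ Gq D q, g.Realize fun _ => D.inv x) :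
    ∃ F : List (ParamFormula L M 1), (∀ h ∈ F, h ∈ D.pStar ∪ q) ∧
      ∀ x ∈ realizeSet (D.pStar ∪ {h | h ∈ F}), g.Realize fun _ => D.inv x := by
  classical
  obtain ⟨φinv, hφinvA, hφinv⟩ := D.inv_definable
  by_contra hcon
  push_neg at hcon
  set ι : ParamFormula L M 1 := notInvForm φinv g with hι
  set p₁ : Set (ParamFormula L M 1) := (D.pStar ∪ q) ∪ {ι} with hp₁
  have hcardAB : #(D.AStar ∪ B : Set M) < κ :=
    (Cardinal.mk_union_le _ _).trans_lt (Cardinal.add_lt_of_lt hℵ.le hA hB)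
  have hp₁over : IsTypeOver p₁ (D.AStar ∪ B) := by
    rintro f (hf | hf)
    · rcases hf with hf | hf
      · exact fun i => Or.inl (D.pStar_over f hf i)
      · exact fun i => Or.inr (hqB f hf i)
    · rw [Set.mem_singleton_iff] at hf
      subst hf
      exact paramsIn_notInvForm (fun i => Or.inl (hφinvA i)) (fun i => Or.inr (hgB i))
  have hfinsat : ∀ s : Set (ParamFormula L M 1), s ⊆ p₁ → s.Finite →
      ∃ a : M, ∀ f ∈ s, f.Realize fun _ => a := by
    intro s hs hsfin
    have h1 : (s ∩ (D.pStar ∪ q)).Finite := hsfin.inter_of_left _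
    set F : List (ParamFormula L M 1) := h1.toFinset.toList with hF
    have hFsub : ∀ h ∈ F, h ∈ D.pStar ∪ q := by
      intro h hh
      exact ((Set.Finite.mem_toFinset h1).1 (Finset.mem_toList.1 hh)).2
    obtain ⟨x, hx, hnx⟩ := hcon F hFsub
    refine ⟨x, fun f hf => ?_⟩
    by_cases hfpq : f ∈ D.pStar ∪ q
    · exact hx f (Or.inr (Finset.mem_toList.2 ((Set.Finite.mem_toFinset h1).2 ⟨hf, hfpq⟩)))
    · have : f = ι := by
        rcases hs hf with h'' | h''
        · exact absurd h'' hfpq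
        · exact h''
      subst this
      rw [hι, realize_notInvForm hφinv]
      exact hnx
  obtain ⟨a, ha⟩ := hsat (D.AStar ∪ B) hcardAB p₁ hp₁over hfinsat
  have haH : a ∈ Gq D q := fun f hf => ha f (Or.inl hf)
  have haι : ι.Realize fun _ => a := ha ι (Or.inr rfl)
  rw [hι, realize_notInvForm hφinv] at haι
  exact haι (hg a haH)

/-- Key lemma: every formula of a member of `R_B` lies in a countable member of `R_B`
which is moreover a subset. -/
lemma exists_countable_sub (hsat : Saturated L M κ) (hℵ : ℵ₀ < κ) (hA : #D.AStar < κ)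
    (hB : #B < κ) {q : Set (ParamFormula L M 1)} (hq : q ∈ RB D κ B)
    {f0 : ParamFormula L M 1} (hf0 : f0 ∈ q) :
    ∃ q' : Set (ParamFormula L M 1), q'.Countable ∧ q' ⊆ q ∧ f0 ∈ q' ∧ q' ∈ RB D κ B := by
  classical
  obtain ⟨hqover, hqsub, hqidx⟩ := hq
  have hmulclosed : ∀ g ∈ q, ∀ x ∈ Gq D q, ∀ y ∈ Gq D q, g.Realize fun _ => D.mul x y := by
    intro g hg x hx y hy
    exact hqsub.2.2.1 x hx y hy g (Or.inr hg)
  have hinvclosed : ∀ g ∈ q, ∀ x ∈ Gq D q, g.Realize fun _ => D.inv x := by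
    intro g hg x hx
    exact hqsub.2.2.2 x hx g (Or.inr hg)
  -- choice of finite "closure witnesses"
  let PM : ParamFormula L M 1 → Prop := fun g =>
    ∃ F : List (ParamFormula L M 1), (∀ h ∈ F, h ∈ D.pStar ∪ q) ∧
      ∀ x ∈ realizeSet (D.pStar ∪ {h | h ∈ F}), ∀ y ∈ realizeSet (D.pStar ∪ {h | h ∈ F}),
        g.Realize fun _ => D.mul x y
  let PI : ParamFormula L M 1 → Prop := fun g =>
    ∃ F : List (ParamFormula L M 1), (∀ h ∈ F, h ∈ D.pStar ∪ q) ∧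
      ∀ x ∈ realizeSet (D.pStar ∪ {h | h ∈ F}), g.Realize fun _ => D.inv x
  let Fm : ParamFormula L M 1 → Set (ParamFormula L M 1) := fun g =>
    if h : PM g then {h' | h' ∈ h.choose ∧ h' ∈ q} else ∅
  let Fi : ParamFormula L M 1 → Set (ParamFormula L M 1) := fun g =>
    if h : PI g then {h' | h' ∈ h.choose ∧ h' ∈ q} else ∅
  have hFm_sub : ∀ g, Fm g ⊆ q := by
    intro g h' hh'
    by_cases h : PM g
    · rw [show Fm g = {h' | h' ∈ h.choose ∧ h' ∈ q} from dif_pos h] at hh'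
      exact hh'.2
    · rw [show Fm g = ∅ from dif_neg h] at hh'
      exact hh'.elim
  have hFi_sub : ∀ g, Fi g ⊆ q := by
    intro g h' hh'
    by_cases h : PI g
    · rw [show Fi g = {h' | h' ∈ h.choose ∧ h' ∈ q} from dif_pos h] at hh'
      exact hh'.2
    · rw [show Fi g = ∅ from dif_neg h] at hh'
      exact hh'.elim
  have hFm_fin : ∀ g, (Fm g).Finite := by
    intro g
    by_cases h : PM g
    · rw [show Fm g = {h' | h' ∈ h.choose ∧ h' ∈ q} from dif_pos h]
      exact (h.choose.finite_toSet).subset fun x hx => hx.1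
    · rw [show Fm g = ∅ from dif_neg h]
      exact Set.finite_empty
  have hFi_fin : ∀ g, (Fi g).Finite := by
    intro g
    by_cases h : PI g
    · rw [show Fi g = {h' | h' ∈ h.choose ∧ h' ∈ q} from dif_pos h]
      exact (h.choose.finite_toSet).subset fun x hx => hx.1
    · rw [show Fi g = ∅ from dif_neg h]
      exact Set.finite_empty
  have hFm_key : ∀ g ∈ q, ∀ x ∈ realizeSet (D.pStar ∪ Fm g),
      ∀ y ∈ realizeSet (D.pStar ∪ Fm g), g.Realize fun _ => D.mul x y := by
    intro g hg x hx y hy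
    have hPM : PM g := claimMul hsat hℵ hA hB hqover (hqover g hg) (hmulclosed g hg)
    have hset : D.pStar ∪ {h | h ∈ hPM.choose} ⊆ D.pStar ∪ Fm g := by
      rintro h (hh | hh)
      · exact Or.inl hh
      · rcases hPM.choose_spec.1 h hh with h' | h'
        · exact Or.inl h'
        · refine Or.inr ?_
          rw [show Fm g = {h' | h' ∈ hPM.choose ∧ h' ∈ q} from dif_pos hPM]
          exact ⟨hh, h'⟩
    exact hPM.choose_spec.2 x (fun f hf => hx f (hset hf)) y (fun f hf => hy f (hset hf))
  have hFi_key : ∀ g ∈ q, ∀ x ∈ realizeSet (D.pStar ∪ Fi g),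
      g.Realize fun _ => D.inv x := by
    intro g hg x hx
    have hPI : PI g := claimInv hsat hℵ hA hB hqover (hqover g hg) (hinvclosed g hg)
    have hset : D.pStar ∪ {h | h ∈ hPI.choose} ⊆ D.pStar ∪ Fi g := by
      rintro h (hh | hh)
      · exact Or.inl hh
      · rcases hPI.choose_spec.1 h hh with h' | h'
        · exact Or.inl h'
        · refine Or.inr ?_
          rw [show Fi g = {h' | h' ∈ hPI.choose ∧ h' ∈ q} from dif_pos hPI]
          exact ⟨hh, h'⟩
    exact hPI.choose_spec.2 x (fun f hf => hx f (hset hf))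
  -- the recursive construction
  let qs : ℕ → Set (ParamFormula L M 1) := fun n =>
    Nat.rec {f0} (fun _ Q => Q ∪ ⋃ g ∈ Q, (Fm g ∪ Fi g)) n
  have hqs_succ : ∀ n, qs (n + 1) = qs n ∪ ⋃ g ∈ qs n, (Fm g ∪ Fi g) := fun n => rfl
  have hqs_sub : ∀ n, qs n ⊆ q := by
    intro n
    induction n with
    | zero => exact Set.singleton_subset_iff.2 hf0
    | succ n ih =>
        rw [hqs_succ]
        refine Set.union_subset ih ?_
        refine Set.iUnion₂_subset fun g _ => ?_
        exact Set.union_subset (hFm_sub g) (hFi_sub g)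
  have hqs_fin : ∀ n, (qs n).Finite := by
    intro n
    induction n with
    | zero => exact Set.finite_singleton _
    | succ n ih =>
        rw [hqs_succ]
        exact ih.union (ih.biUnion fun g _ => (hFm_fin g).union (hFi_fin g))
  set q' : Set (ParamFormula L M 1) := ⋃ n, qs n with hq'
  have hq'_sub : q' ⊆ q := Set.iUnion_subset hqs_sub
  have hq'_count : q'.Countable := Set.countable_iUnion fun n => (hqs_fin n).countable
  have hf0' : f0 ∈ q' := Set.mem_iUnion.2 ⟨0, rfl⟩
  have hGqsub : Gq D q ⊆ Gq D q' := Gq_antitone hq'_sub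
  have hstep : ∀ g ∈ q', Fm g ∪ Fi g ⊆ q' := by
    intro g hg
    obtain ⟨n, hn⟩ := Set.mem_iUnion.1 hg
    intro h hh
    refine Set.mem_iUnion.2 ⟨n + 1, ?_⟩
    rw [hqs_succ]
    exact Or.inr (Set.mem_iUnion₂.2 ⟨g, hn, hh⟩)
  refine ⟨q', hq'_count, hq'_sub, hf0', ?_⟩
  refine ⟨fun f hf => hqover f (hq'_sub hf), ?_, ?_⟩
  · -- subgroup
    refine ⟨Gq_subset_carrier q', hGqsub hqsub.2.1, ?_, ?_⟩
    · intro x hx y hy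
      intro f hf
      rcases hf with hf | hf
      · have hcar : D.mul x y ∈ D.carrier :=
          D.mul_mem' x (Gq_subset_carrier q' hx) y (Gq_subset_carrier q' hy)
        exact hcar f hf
      · have hgq : f ∈ q := hq'_sub hf
        have hFmf : Fm f ⊆ q' := fun h hh => hstep f hf (Or.inl hh)
        have hxm : x ∈ realizeSet (D.pStar ∪ Fm f) :=
          realizeSet_antitone (Set.union_subset_union_right _ hFmf) hx
        have hym : y ∈ realizeSet (D.pStar ∪ Fm f) :=
          realizeSet_antitone (Set.union_subset_union_right _ hFmf) hy
        exact hFm_key f hgq x hxm y hym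
    · intro x hx
      intro f hf
      rcases hf with hf | hf
      · have hcar : D.inv x ∈ D.carrier := D.inv_mem' x (Gq_subset_carrier q' hx)
        exact hcar f hf
      · have hgq : f ∈ q := hq'_sub hf
        have hFif : Fi f ⊆ q' := fun h hh => hstep f hf (Or.inr hh)
        have hxm : x ∈ realizeSet (D.pStar ∪ Fi f) :=
          realizeSet_antitone (Set.union_subset_union_right _ hFif) hx
        exact hFi_key f hgq x hxm
  · -- index
    obtain ⟨S, hS1, hS2, hS3⟩ := hqidx
    refine ⟨S, hS1, hS2, fun g hg => ?_⟩
    obtain ⟨s, hs, hm⟩ := hS3 g hg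
    exact ⟨s, hs, hGqsub hm⟩

/-- `q_B` itself belongs to `R_B`. -/
lemma qB_mem_RB (D : DefGroup L M) (hreg : κ.IsRegular) (hsl : κ.IsStrongLimit)
    (hℵ : ℵ₀ < κ) (hT : theoryCard L < κ) (hA : #D.AStar < κ) (hB : #B < κ) :
    qB D κ B ∈ RB D κ B := by
  have hemp : (∅ : Set (ParamFormula L M 1)) ∈ RB D κ B := empty_mem_RB hℵ
  have hGqB : Gq D (qB D κ B) = ⋂ r ∈ RB D κ B, Gq D r := by
    rw [Gq, qB]
    exact realizeSet_union_sUnion _ _ ⟨∅, hemp⟩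
  refine ⟨?_, ?_, ?_⟩
  · rintro f ⟨r, hr, hfr⟩
    exact hr.1 f hfr
  · refine ⟨Gq_subset_carrier _, ?_, ?_, ?_⟩
    · rw [hGqB]
      exact Set.mem_iInter₂.2 fun r hr => hr.2.1.2.1
    · intro x hx y hy
      rw [hGqB] at hx hy ⊢
      refine Set.mem_iInter₂.2 fun r hr => ?_
      exact hr.2.1.2.2.1 x (Set.mem_iInter₂.1 hx r hr) y (Set.mem_iInter₂.1 hy r hr)
    · intro x hx
      rw [hGqB] at hx ⊢
      refine Set.mem_iInter₂.2 fun r hr => ?_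
      exact hr.2.1.2.2.2 x (Set.mem_iInter₂.1 hx r hr)
  · have hRBcard : #(RB D κ B) < κ := RB_card_lt D hreg hsl hℵ hT hB
    obtain ⟨S, hS1, hS2, hS3⟩ := indexLT_of_family D hreg hsl hℵ hRBcard
      (fun r : ↥(RB D κ B) => Gq D r.1) (fun r => r.2.2.1) (fun r => r.2.2.2)
    refine ⟨S, hS1, hS2, fun g hg => ?_⟩
    obtain ⟨s, hs, hm⟩ := hS3 g hg
    refine ⟨s, hs, ?_⟩
    rw [hGqB]
    exact Set.mem_iInter₂.2 fun r hr => hm ⟨r, hr⟩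

end Claims


end Aux

/-- Observation 2.3(1)-(3) of [Sh:886]: `q_B` is the union of the `q_{b̄}` for countable
`b̄` from `B` and of the countable members of `R_B`; `q_B` is the `⊆`-maximal member of
`R_B`; and `G_B` is the intersection of the `G_q` for `q ∈ R_B` (equivalently for countable
`q ∈ R_B`) and is the `⊆`-minimal member of `{G_q : q ∈ R_B}`. -/
theorem observation_dt18
    {L : FirstOrder.Language.{u, u}} {M : Type u} [L.Structure M]
    (κbar : Cardinal.{u}) (hκinacc : κbar.IsInaccessible) (hκT : theoryCard L < κbar)
    (hκsat : Saturated L M κbar)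
    (D : DefGroup L M) (hAκ : #(D.AStar) < κbar)
    (B : Set M) (hB : #B < κbar) :
    (qB D κbar B = ⋃₀ {p | ∃ s : Set M, s ⊆ B ∧ s.Countable ∧ p = qB D κbar s}) ∧
    (qB D κbar B = ⋃₀ {q ∈ RB D κbar B | q.Countable}) ∧
    (qB D κbar B ∈ RB D κbar B ∧ ∀ q ∈ RB D κbar B, q ⊆ qB D κbar B) ∧
    (GB D κbar B = ⋂ q ∈ RB D κbar B, Gq D q) ∧
    (GB D κbar B = ⋂ q ∈ {q ∈ RB D κbar B | q.Countable}, Gq D q) ∧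
    ((∃ q ∈ RB D κbar B, GB D κbar B = Gq D q) ∧
      ∀ q ∈ RB D κbar B, GB D κbar B ⊆ Gq D q) := by
  obtain ⟨hℵ, hreg, hsl⟩ := And.intro hκinacc.aleph0_lt (And.intro hκinacc.isRegular hκinacc.isStrongLimit)
  have hemp : (∅ : Set (ParamFormula L M 1)) ∈ RB D κbar B := empty_mem_RB hℵ
  have hne : (RB D κbar B).Nonempty := ⟨∅, hemp⟩
  have hqBmem : qB D κbar B ∈ RB D κbar B := qB_mem_RB D hreg hsl hℵ hκT hAκ hB
  have hGqB : Gq D (qB D κbar B) = ⋂ r ∈ RB D κbar B, Gq D r := by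
    rw [Gq, qB]
    exact realizeSet_union_sUnion _ _ hne
  have hGB_eq : GB D κbar B = Gq D (qB D κbar B) := by
    rw [GB, Gq, realizeSet_union]
    exact Set.inter_comm _ _
  have key : ∀ q ∈ RB D κbar B, ∀ f ∈ q, ∃ q' : Set (ParamFormula L M 1),
      q'.Countable ∧ q' ⊆ q ∧ f ∈ q' ∧ q' ∈ RB D κbar B :=
    fun q hq f hf => exists_countable_sub hκsat hℵ hAκ hB hq hf
  have hC2 : qB D κbar B = ⋃₀ {q ∈ RB D κbar B | q.Countable} := by
    apply Set.Subset.antisymm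
    · rintro f ⟨q, hq, hfq⟩
      obtain ⟨q', hc, hsub, hf', hq'⟩ := key q hq f hfq
      exact ⟨q', ⟨hq', hc⟩, hf'⟩
    · rintro f ⟨q, ⟨hq, _⟩, hfq⟩
      exact ⟨q, hq, hfq⟩
  have hC1 : qB D κbar B = ⋃₀ {p | ∃ s : Set M, s ⊆ B ∧ s.Countable ∧ p = qB D κbar s} := by
    apply Set.Subset.antisymm
    · rintro f ⟨q, hq, hfq⟩
      obtain ⟨q', hc, hsub, hf', hq'⟩ := key q hq f hfq
      set s : Set M := ⋃ g ∈ q', Set.range g.params with hs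
      have hsB : s ⊆ B := by
        rintro x hx
        obtain ⟨g, hg, i, rfl⟩ := by
          simpa [hs, Set.mem_iUnion] using hx
        exact hq'.1 g hg i
      have hscount : s.Countable :=
        Set.Countable.biUnion hc fun g _ => (Set.finite_range _).countable
      have hq's : q' ∈ RB D κbar s := by
        refine ⟨?_, hq'.2⟩
        intro g hg i
        exact Set.mem_biUnion hg (Set.mem_range_self i)
      exact ⟨qB D κbar s, ⟨s, hsB, hscount, rfl⟩, ⟨q', hq's, hf'⟩⟩
    · rintro f ⟨p, ⟨s, hsB, _, rfl⟩, hfp⟩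
      obtain ⟨q, hq, hfq⟩ := hfp
      refine ⟨q, ?_, hfq⟩
      exact ⟨fun g hg i => hsB (hq.1 g hg i), hq.2⟩
  have hC4 : GB D κbar B = ⋂ q ∈ RB D κbar B, Gq D q := by
    rw [hGB_eq, hGqB]
  have hC5 : GB D κbar B = ⋂ q ∈ {q ∈ RB D κbar B | q.Countable}, Gq D q := by
    rw [hGB_eq]
    have : Gq D (qB D κbar B) = Gq D (⋃₀ {q ∈ RB D κbar B | q.Countable}) := by
      rw [← hC2]
    rw [this, Gq]
    exact realizeSet_union_sUnion _ _ ⟨∅, hemp, Set.countable_empty⟩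
  refine ⟨hC1, hC2, ⟨hqBmem, fun q hq => Set.subset_sUnion_of_mem hq⟩, hC4, hC5,
    ⟨qB D κbar B, hqBmem, hGB_eq⟩, fun q hq => ?_⟩
  rw [hC4]
  exact Set.biInter_subset_of_mem hq

end Paper886
end

section
/- T is k-dependent provided that: for every m, ℓ < ω and every formula φ(x̄_m, ȳ) ∈ L(τ_T), for infinitely many n < ω it holds that every set A ⊆ 𝔠 with |A| ≤ n satisfies |S^m_{{φ(x̄_m,ȳ)}}(A)| < 2^{(n/ℓ)^k}. -/
open FirstOrder Cardinal Set

universe u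

namespace Paper886

variable {L : FirstOrder.Language.{u, u}} {M : Type u} [L.Structure M]

/-- Observation 2.7(1) of [Sh:886]: `T` is `k`-dependent provided that for every `m`, `ℓ ≥ 1`
and formula `φ(x̄_m, ȳ)`, for infinitely many `n` every parameter set `A` with `|A| ≤ n`
admits fewer than `2^{(n/ℓ)^k}` complete `φ`-types over `A` in the variables `x̄_m`. -/
theorem observation_nd17_1
    {L : FirstOrder.Language.{u, u}} {M : Type u} [L.Structure M]
    (κbar : Cardinal.{u}) (hκinacc : κbar.IsInaccessible) (hκT : theoryCard L < κbar)
    (hκsat : Saturated L M κbar)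
    (k : ℕ)
    (hcount : ∀ (m np ℓ : ℕ), 0 < ℓ → ∀ φ : L.Formula (Fin m ⊕ Fin np),
      {n : ℕ | ∀ A : Finset M, A.card ≤ n →
        #{S : Set (Fin np → M) | ∃ x : Fin m → M,
            S = {b | (∀ i, b i ∈ A) ∧ φ.Realize (Sum.elim x b)}} <
          (2 : Cardinal.{u}) ^ (((n / ℓ) ^ k : ℕ) : Cardinal.{u})}.Infinite) :
    KDependent L M κbar k := by
  rintro ⟨nx, ny, φ, hφ⟩
  classical
  set e := Fintype.equivFin ((ℓ : Fin k) × Fin (ny ℓ)) with he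
  set np := Fintype.card ((ℓ : Fin k) × Fin (ny ℓ)) with hnp
  set φ' : L.Formula (Fin nx ⊕ Fin np) := φ.relabel (Sum.map id e) with hφ'
  set L0 : ℕ := max 1 (∑ ℓ', ny ℓ') with hL0
  have hL0pos : 0 < L0 := lt_of_lt_of_le Nat.one_pos (le_max_left _ _)
  obtain ⟨n, hn⟩ := (hcount nx np L0 hL0pos φ').nonempty
  set r : ℕ := n / L0 with hr
  set ι : Type u := ULift.{u} (Fin r) with hι
  obtain ⟨a, hpat⟩ := hφ ι (by
    have : #ι < Cardinal.aleph0 := lt_of_eq_of_lt (Cardinal.mk_fintype ι) (Cardinal.nat_lt_aleph0 _)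
    exact this.trans hκinacc.1)
  -- the parameter set
  set A : Finset M :=
    Finset.image (fun p : (ℓ' : Fin k) × (ι × Fin (ny ℓ')) => a p.1 p.2.1 p.2.2) Finset.univ with hA
  have hAcard : A.card ≤ n := by
    calc A.card ≤ Fintype.card ((ℓ' : Fin k) × (ι × Fin (ny ℓ'))) :=
          (Finset.card_image_le).trans (by simp)
      _ = r * ∑ ℓ', ny ℓ' := by
          simp [Fintype.card_sigma, Finset.mul_sum, ι, Fintype.card_ulift]
      _ ≤ r * L0 := Nat.mul_le_mul_left _ (le_max_right _ _)
      _ ≤ n := Nat.div_mul_le_self n L0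
  have hkey := hn A hAcard
  -- pattern witnesses
  choose x hx using fun u : Set (Fin k → ι) => hpat u Finset.univ
  set F : Set (Fin k → ι) → Set (Fin np → M) :=
    fun u => {b | (∀ i, b i ∈ A) ∧ φ'.Realize (Sum.elim (x u) b)} with hF
  have hmem : ∀ u, F u ∈ {S : Set (Fin np → M) | ∃ y : Fin nx → M,
      S = {b | (∀ i, b i ∈ A) ∧ φ'.Realize (Sum.elim y b)}} := fun u => ⟨x u, rfl⟩
  have hbkey : ∀ (η : Fin k → ι) (u : Set (Fin k → ι)),
      (fun i => a (e.symm i).1 (η (e.symm i).1) (e.symm i).2) ∈ F u ↔ η ∈ u := by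
    intro η u
    set bη : Fin np → M := fun i => a (e.symm i).1 (η (e.symm i).1) (e.symm i).2 with hbη
    have h1 : ∀ i, bη i ∈ A := by
      intro i
      exact Finset.mem_image.2 ⟨⟨(e.symm i).1, η (e.symm i).1, (e.symm i).2⟩,
        Finset.mem_univ _, rfl⟩
    have h2 : φ'.Realize (Sum.elim (x u) bη) ↔ η ∈ u := by
      rw [hφ', FirstOrder.Language.Formula.realize_relabel]
      have : (Sum.elim (x u) bη ∘ Sum.map id e) =
          Sum.elim (x u) (fun p : (ℓ : Fin k) × Fin (ny ℓ) => a p.1 (η p.1) p.2) := by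
        funext z
        cases z with
        | inl z => rfl
        | inr p =>
            exact congrArg (fun q : (ℓ : Fin k) × Fin (ny ℓ) => a q.1 (η q.1) q.2)
              (e.symm_apply_apply p)
      rw [this]
      exact hx u η (Finset.mem_univ _)
    constructor
    · rintro ⟨-, h⟩; exact h2.1 h
    · intro h; exact ⟨h1, h2.2 h⟩
  have hFinj : Function.Injective F := by
    intro u v huv
    ext η
    rw [← hbkey η u, ← hbkey η v, huv]
  -- cardinality contradiction
  have hle : (2 : Cardinal.{u}) ^ (((n / L0) ^ k : ℕ) : Cardinal.{u}) ≤
      #{S : Set (Fin np → M) | ∃ y : Fin nx → M,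
        S = {b | (∀ i, b i ∈ A) ∧ φ'.Realize (Sum.elim y b)}} := by
    have h1 : #(Set (Fin k → ι)) = (2 : Cardinal.{u}) ^ (((n / L0) ^ k : ℕ) : Cardinal.{u}) := by
      rw [Cardinal.mk_set, Cardinal.mk_fintype]
      congr 1
      simp [ι, ← hr]
    rw [← h1]
    exact Cardinal.mk_le_of_injective (f := fun u => (⟨F u, hmem u⟩ :
      {S : Set (Fin np → M) | ∃ y : Fin nx → M,
        S = {b | (∀ i, b i ∈ A) ∧ φ'.Realize (Sum.elim y b)}}))
      (fun u v h => hFinj (congrArg Subtype.val h))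
  exact absurd hkey (not_lt_of_ge hle)

end Paper886
end

section
/- In the definition of a k-independent formula one may restrict to increasing index functions: a formula φ(x̄, ȳ_0, …, ȳ_{k-1}) is k-independent for T provided that for every n < ω there are tuples ā_{ℓ,m} ∈ ^{lg(ȳ_ℓ)}𝔠 for m < n, ℓ < k, such that ⟨φ(x̄, ā_{0,η(0)}, …, ā_{k-1,η(k-1)}) : η ∈ inc_k(n)⟩ is an independent sequence of formulas, where inc_k(n) is the set of strictly increasing η ∈ ^kn. -/
open FirstOrder Cardinal Set

universe u

namespace Paper886

variable {L : FirstOrder.Language.{u, u}} {M : Type u} [L.Structure M]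

section ObsAux

open FirstOrder.Language

variable {L : FirstOrder.Language.{u, u}} {M : Type u} [L.Structure M]

/-- Finite conjunction of a list of formulas. -/
def listConj {α : Type*} : List (L.Formula α) → L.Formula α
  | [] => ⊤
  | ψ :: l => ψ ⊓ listConj l

theorem realize_listConj {α : Type*} (l : List (L.Formula α)) (v : α → M) :
    (listConj l).Realize v ↔ ∀ ψ ∈ l, ψ.Realize v := by
  induction l with
  | nil => simp [listConj, Formula.realize_top]
  | cons ψ l ih => simp [listConj, Formula.realize_inf, ih]

/-- An "entry": a first-order formula whose free variables are labelled by a finite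
family of elements of `V`. -/
structure Entry (L : FirstOrder.Language.{u, u}) (V : Type u) : Type (u + 1) where
  α : Type u
  fin : Finite α
  φ : L.Formula α
  vmap : α → V

instance {V : Type u} (σ : Entry L V) : Finite σ.α := σ.fin

/-- Satisfaction of an entry by an assignment `c : V → M`. -/
def Entry.Sat {V : Type u} (σ : Entry L V) (c : V → M) : Prop :=
  σ.φ.Realize (c ∘ σ.vmap)

theorem exists_psi [Nonempty M] {V : Type u} (r : V → V → Prop) (hirr : ∀ w, ¬ r w w)
    (v : V) (c : V → M) (t : Finset (Entry L V)) :
    ∃ f : ParamFormula L M 1,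
      (∀ i, f.params i ∈ c '' {w | r w v}) ∧
      ∀ x : M, (f.Realize fun _ => x) ↔
        ∃ d : V → M, d v = x ∧ (∀ w, r w v → d w = c w) ∧ ∀ σ ∈ t, σ.Sat (M := M) d := by
  classical
  let A : Type (u + 1) := (σ : {x // x ∈ t}) × σ.1.α
  let h : A → V := fun a => a.1.1.vmap a.2
  let P : Set V := {w | w ∈ Set.range h ∧ r w v}
  have hPfin : P.Finite := (Set.finite_range h).subset fun w hw => hw.1
  let X : Set V := {w | w ∈ Set.range h ∧ ¬ r w v ∧ w ≠ v}
  have hXfin : X.Finite := (Set.finite_range h).subset fun w hw => hw.1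
  haveI := hPfin.fintype
  haveI : Finite ↥X := hXfin.to_subtype
  let mp := Fintype.card ↥P
  let eP : ↥P ≃ Fin mp := Fintype.equivFin ↥P
  let g : A → ((Fin 1 ⊕ Fin mp) ⊕ ↥X) := fun a =>
    if hp : r (h a) v then Sum.inl (Sum.inr (eP ⟨h a, ⟨a, rfl⟩, hp⟩))
    else if hv : h a = v then Sum.inl (Sum.inl 0)
    else Sum.inr ⟨h a, ⟨a, rfl⟩, hp, hv⟩
  let pars : Fin mp → M := fun j => c ((eP.symm j : ↥P) : V)
  let conj : L.Formula A :=
    listConj ((t.attach.toList).map fun σ => σ.1.φ.relabel fun b => (⟨σ, b⟩ : A))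
  refine ⟨⟨mp, (conj.relabel g).iExs ↥X, pars⟩,
    fun j => ⟨((eP.symm j : ↥P) : V), (eP.symm j).2.2, rfl⟩, fun x => ?_⟩
  have hval : ∀ (i : ↥X → M) (d : V → M), d v = x → (∀ w, r w v → d w = c w) →
      (∀ z : ↥X, i z = d z.1) →
      ∀ a : A, (Sum.elim (Sum.elim (fun _ : Fin 1 => x) pars) i (g a)) = d (h a) := by
    intro i d hdv hdc hdi a
    by_cases hp : r (h a) v
    · have hga : g a = Sum.inl (Sum.inr (eP ⟨h a, ⟨a, rfl⟩, hp⟩)) := dif_pos hp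
      rw [hga]
      show pars (eP ⟨h a, ⟨a, rfl⟩, hp⟩) = d (h a)
      have : pars (eP ⟨h a, ⟨a, rfl⟩, hp⟩) = c ((eP.symm (eP ⟨h a, ⟨a, rfl⟩, hp⟩) : ↥P) : V) := rfl
      rw [this, Equiv.symm_apply_apply]
      exact (hdc (h a) hp).symm
    · by_cases hv : h a = v
      · have hga : g a = Sum.inl (Sum.inl 0) := by
          rw [show g a = _ from dif_neg hp, dif_pos hv]
        rw [hga]
        show x = d (h a)
        rw [hv, hdv]
      · have hga : g a = Sum.inr ⟨h a, ⟨a, rfl⟩, hp, hv⟩ := by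
          rw [show g a = _ from dif_neg hp, dif_neg hv]
        rw [hga]
        show i ⟨h a, ⟨a, rfl⟩, hp, hv⟩ = d (h a)
        exact hdi ⟨h a, ⟨a, rfl⟩, hp, hv⟩
  show ((conj.relabel g).iExs ↥X).Realize (Sum.elim (fun _ : Fin 1 => x) pars) ↔ _
  rw [Formula.realize_iExs]
  simp only [Formula.realize_relabel]
  show (∃ i, conj.Realize fun a => Sum.elim (Sum.elim (fun _ : Fin 1 => x) pars) i (g a)) ↔ _
  constructor
  · rintro ⟨i, hi⟩
    let d : V → M := fun z =>
      if z = v then x else if hr : r z v then c z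
      else if hz : z ∈ X then i ⟨z, hz⟩ else Classical.arbitrary M
    have hdv : d v = x := if_pos rfl
    have hdc : ∀ w, r w v → d w = c w := by
      intro w hw
      have hwv : w ≠ v := fun e => hirr v (e ▸ hw)
      show (if w = v then x else if hr : r w v then c w else _) = c w
      rw [if_neg hwv, dif_pos hw]
    have hdi : ∀ z : ↥X, i z = d z.1 := by
      intro z
      have h1 : z.1 ≠ v := z.2.2.2
      have h2 : ¬ r z.1 v := z.2.2.1
      show i z = (if z.1 = v then x else if hr : r z.1 v then c z.1 else
        if hz : z.1 ∈ X then i ⟨z.1, hz⟩ else Classical.arbitrary M)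
      rw [if_neg h1, dif_neg h2, dif_pos z.2]
    refine ⟨d, hdv, hdc, fun σ hσ => ?_⟩
    rw [realize_listConj] at hi
    have hh := hi _ (List.mem_map.mpr ⟨⟨σ, hσ⟩, by simp, rfl⟩)
    rw [Formula.realize_relabel] at hh
    have heq : ((fun a => Sum.elim (Sum.elim (fun _ : Fin 1 => x) pars) i (g a)) ∘
        fun b => (⟨⟨σ, hσ⟩, b⟩ : A)) = d ∘ σ.vmap := by
      funext b
      exact hval i d hdv hdc hdi ⟨⟨σ, hσ⟩, b⟩
    rw [Entry.Sat]
    rwa [heq] at hh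
  · rintro ⟨d, hdv, hdc, hds⟩
    refine ⟨fun z => d z.1, ?_⟩
    rw [realize_listConj]
    intro ψ hψ
    obtain ⟨σ, -, rfl⟩ := List.mem_map.mp hψ
    rw [Formula.realize_relabel]
    have heq : ((fun a => Sum.elim (Sum.elim (fun _ : Fin 1 => x) pars)
        (fun z : ↥X => d z.1) (g a)) ∘ fun b => (⟨σ, b⟩ : A)) = d ∘ σ.1.vmap := by
      funext b
      exact hval (fun z => d z.1) d hdv hdc (fun z => rfl) ⟨σ, b⟩
    rw [heq]
    exact hds σ.1 σ.2

theorem exists_rmax_finset {V : Type*} (r : V → V → Prop) [IsTrichotomous V r] [IsTrans V r]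
    (s : Finset V) (hne : s.Nonempty) : ∃ m ∈ s, ∀ w ∈ s, r w m ∨ w = m := by
  classical
  induction s using Finset.induction_on with
  | empty => exact absurd hne (by simp)
  | @insert a s ha ih =>
    by_cases hs : s.Nonempty
    · obtain ⟨m, hm, hmax⟩ := ih hs
      rcases trichotomous_of r a m with h | h | h
      · refine ⟨m, Finset.mem_insert_of_mem hm, fun w hw => ?_⟩
        rcases Finset.mem_insert.mp hw with rfl | hw
        · exact Or.inl h
        · exact hmax w hw
      · refine ⟨m, Finset.mem_insert_of_mem hm, fun w hw => ?_⟩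
        rcases Finset.mem_insert.mp hw with rfl | hw
        · exact Or.inr h
        · exact hmax w hw
      · refine ⟨a, Finset.mem_insert_self _ _, fun w hw => ?_⟩
        rcases Finset.mem_insert.mp hw with rfl | hw
        · exact Or.inr rfl
        · rcases hmax w hw with h' | rfl
          · exact Or.inl (Trans.trans h' h)
          · exact Or.inl h
    · rw [Finset.not_nonempty_iff_eq_empty] at hs
      subst hs
      exact ⟨a, Finset.mem_insert_self _ _, fun w hw => by
        rcases Finset.mem_insert.mp hw with rfl | hw
        · exact Or.inr rfl
        · exact absurd hw (by simp)⟩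

theorem exists_rmax {V : Type*} (r : V → V → Prop) [IsTrichotomous V r] [IsTrans V r]
    {s : Set V} (hfin : s.Finite) (hne : s.Nonempty) :
    ∃ m ∈ s, ∀ w ∈ s, r w m ∨ w = m := by
  obtain ⟨m, hm, hmax⟩ := exists_rmax_finset r hfin.toFinset (by simpa using hne)
  exact ⟨m, hfin.mem_toFinset.mp hm, fun w hw => hmax w (hfin.mem_toFinset.mpr hw)⟩

/-- The formula chosen by `exists_psi`. -/
noncomputable def psi [Nonempty M] {V : Type u} (r : V → V → Prop) (hirr : ∀ w, ¬ r w w)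
    (v : V) (c : V → M) (t : Finset (Entry L V)) : ParamFormula L M 1 :=
  (exists_psi r hirr v c t).choose

theorem psi_params [Nonempty M] {V : Type u} (r : V → V → Prop) (hirr : ∀ w, ¬ r w w)
    (v : V) (c : V → M) (t : Finset (Entry L V)) :
    ∀ i, (psi r hirr v c t).params i ∈ c '' {w | r w v} :=
  (exists_psi r hirr v c t).choose_spec.1

theorem psi_realize [Nonempty M] {V : Type u} (r : V → V → Prop) (hirr : ∀ w, ¬ r w w)
    (v : V) (c : V → M) (t : Finset (Entry L V)) :
    ∀ x : M, ((psi r hirr v c t).Realize fun _ => x) ↔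
      ∃ d : V → M, d v = x ∧ (∀ w, r w v → d w = c w) ∧ ∀ σ ∈ t, σ.Sat (M := M) d :=
  (exists_psi r hirr v c t).choose_spec.2

/-- The type used at stage `v` of the recursion. -/
noncomputable def pvAt [Nonempty M] {V : Type u} (r : V → V → Prop) (hirr : ∀ w, ¬ r w w)
    (E : Set (Entry L V)) (c : V → M) (v : V) : Set (ParamFormula L M 1) :=
  {f | ∃ t : Finset (Entry L V), ↑t ⊆ E ∧ f = psi r hirr v c t}

open scoped Classical in
/-- The recursively constructed assignment. -/
noncomputable def cAt [Nonempty M] {V : Type u} (r : V → V → Prop) (hirr : ∀ w, ¬ r w w)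
    (E : Set (Entry L V)) (hwf : WellFounded r) : V → M :=
  hwf.fix fun v prev =>
    if hex : ∃ a : M, a ∈ realizeSet (pvAt r hirr E
        (fun w => if hw : r w v then prev w hw else Classical.arbitrary M) v)
    then hex.choose else Classical.arbitrary M

open scoped Classical in
/-- The restriction of `cAt` to the predecessors of `v`. -/
noncomputable def ccAt [Nonempty M] {V : Type u} (r : V → V → Prop) (hirr : ∀ w, ¬ r w w)
    (E : Set (Entry L V)) (hwf : WellFounded r) (v : V) : V → M :=
  fun w => if hw : r w v then cAt r hirr E hwf w else Classical.arbitrary M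

open scoped Classical in
theorem cAt_eq [Nonempty M] {V : Type u} (r : V → V → Prop) (hirr : ∀ w, ¬ r w w)
    (E : Set (Entry L V)) (hwf : WellFounded r) (v : V) :
    cAt r hirr E hwf v =
      if hex : ∃ a : M, a ∈ realizeSet (pvAt r hirr E (ccAt r hirr E hwf v) v)
      then hex.choose else Classical.arbitrary M := by
  unfold cAt
  rw [WellFounded.fix_eq]
  rfl

theorem realize_entries [Nonempty M] {V : Type u} (κ : Cardinal.{u})
    (hsat : Saturated L M κ) (hV : #V < κ) (E : Set (Entry L V))
    (hfs : ∀ t : Finset (Entry L V), ↑t ⊆ E → ∃ d : V → M, ∀ σ ∈ t, σ.Sat (M := M) d) :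
    ∃ c : V → M, ∀ σ ∈ E, σ.Sat (M := M) c := by
  classical
  let r : V → V → Prop := WellOrderingRel
  haveI hwo : IsWellOrder V r := WellOrderingRel.isWellOrder
  have hirr : ∀ w : V, ¬ r w w := fun w => irrefl w
  have hwf : WellFounded r := hwo.toIsWellFounded.wf
  set c : V → M := cAt r hirr E hwf with hcdef
  have hccAt : ∀ v w, r w v → ccAt r hirr E hwf v w = c w := by
    intro v w hw
    unfold ccAt
    rw [dif_pos hw]
  have main : ∀ v : V, ∀ t : Finset (Entry L V), ↑t ⊆ E →
      ∃ d : V → M, (∀ σ ∈ t, σ.Sat (M := M) d) ∧ ∀ w, r w v ∨ w = v → d w = c w := by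
    intro v
    refine hwf.induction (C := fun v => ∀ t : Finset (Entry L V), ↑t ⊆ E →
      ∃ d : V → M, (∀ σ ∈ t, σ.Sat (M := M) d) ∧ ∀ w, r w v ∨ w = v → d w = c w) v ?_
    clear v
    intro v IH t ht
    have weak : ∀ t' : Finset (Entry L V), ↑t' ⊆ E →
        ∃ d : V → M, (∀ σ ∈ t', σ.Sat (M := M) d) ∧ ∀ w, r w v → d w = c w := by
      intro t' ht'
      have hWfin : {w : V | (∃ σ ∈ t', w ∈ Set.range σ.vmap) ∧ r w v}.Finite := by
        have hsub : {w : V | (∃ σ ∈ t', w ∈ Set.range σ.vmap) ∧ r w v} ⊆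
            ⋃ σ ∈ (↑t' : Set (Entry L V)), Set.range σ.vmap := by
          rintro w ⟨⟨σ, hσ, hw⟩, -⟩
          exact Set.mem_biUnion hσ hw
        exact (Set.Finite.biUnion t'.finite_toSet fun σ _ => Set.finite_range σ.vmap).subset hsub
      by_cases hW : {w : V | (∃ σ ∈ t', w ∈ Set.range σ.vmap) ∧ r w v}.Nonempty
      · obtain ⟨m, hmW, hmax⟩ := exists_rmax r hWfin hW
        obtain ⟨d, hd1, hd2⟩ := IH m hmW.2 t' ht'
        refine ⟨fun z => if r z v then c z else d z, fun σ hσ => ?_, fun w hw => if_pos hw⟩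
        have heq : (fun z => if r z v then c z else d z) ∘ σ.vmap = d ∘ σ.vmap := by
          funext b
          by_cases hb : r (σ.vmap b) v
          · have hmem : σ.vmap b ∈ {w : V | (∃ σ ∈ t', w ∈ Set.range σ.vmap) ∧ r w v} :=
              ⟨⟨σ, hσ, ⟨b, rfl⟩⟩, hb⟩
            have hdc : d (σ.vmap b) = c (σ.vmap b) := hd2 _ (hmax _ hmem)
            simp only [Function.comp_apply, if_pos hb, hdc]
          · simp only [Function.comp_apply, if_neg hb]
        rw [Entry.Sat, heq]
        exact hd1 σ hσ
      · obtain ⟨d, hd⟩ := hfs t' ht'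
        refine ⟨fun z => if r z v then c z else d z, fun σ hσ => ?_, fun w hw => if_pos hw⟩
        have heq : (fun z => if r z v then c z else d z) ∘ σ.vmap = d ∘ σ.vmap := by
          funext b
          have hb : ¬ r (σ.vmap b) v := fun hb => hW ⟨_, ⟨σ, hσ, ⟨b, rfl⟩⟩, hb⟩
          simp only [Function.comp_apply, if_neg hb]
        rw [Entry.Sat, heq]
        exact hd σ hσ
    have hex : ∃ a : M, a ∈ realizeSet (pvAt r hirr E (ccAt r hirr E hwf v) v) := by
      apply hsat (ccAt r hirr E hwf v '' {w | r w v}) ?_ _ ?_ ?_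
      · exact lt_of_le_of_lt (le_trans Cardinal.mk_image_le (Cardinal.mk_set_le _)) hV
      · rintro f ⟨t', ht', rfl⟩
        exact psi_params r hirr v _ t'
      · intro S hS hSfin
        have hch : ∀ f : {x // x ∈ hSfin.toFinset}, ∃ t' : Finset (Entry L V),
            ↑t' ⊆ E ∧ f.1 = psi r hirr v (ccAt r hirr E hwf v) t' := fun f =>
          hS (hSfin.mem_toFinset.mp f.2)
        choose tf htf1 htf2 using hch
        obtain ⟨d, hd1, hd2⟩ := weak (hSfin.toFinset.attach.biUnion tf) (by
          intro σ hσ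
          rw [Finset.mem_coe, Finset.mem_biUnion] at hσ
          obtain ⟨f, -, hmem⟩ := hσ
          exact htf1 f (Finset.mem_coe.mpr hmem))
        refine ⟨d v, fun f hf => ?_⟩
        have hfF : f ∈ hSfin.toFinset := hSfin.mem_toFinset.mpr hf
        rw [show f = psi r hirr v (ccAt r hirr E hwf v) (tf ⟨f, hfF⟩) from htf2 ⟨f, hfF⟩,
          psi_realize r hirr v _ _ (d v)]
        refine ⟨d, rfl, fun w hw => (hd2 w hw).trans (hccAt v w hw).symm, fun σ hσ => ?_⟩
        exact hd1 σ (Finset.mem_biUnion.mpr ⟨⟨f, hfF⟩, Finset.mem_attach _ _, hσ⟩)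
    have hcv : c v ∈ realizeSet (pvAt r hirr E (ccAt r hirr E hwf v) v) := by
      rw [hcdef, cAt_eq r hirr E hwf v, dif_pos hex]
      exact hex.choose_spec
    obtain ⟨d, hdv, hdw, hdsat⟩ := (psi_realize r hirr v (ccAt r hirr E hwf v) t (c v)).1
      (hcv _ ⟨t, ht, rfl⟩)
    refine ⟨d, hdsat, fun w hw => ?_⟩
    rcases hw with hw | rfl
    · exact (hdw w hw).trans (hccAt v w hw)
    · exact hdv
  refine ⟨c, fun σ hσ => ?_⟩
  by_cases hα : Nonempty σ.α
  · have hfin : (Set.range σ.vmap).Finite := Set.finite_range _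
    have hne : (Set.range σ.vmap).Nonempty := Set.range_nonempty _
    obtain ⟨m, hm, hmax⟩ := exists_rmax r hfin hne
    obtain ⟨d, hd1, hd2⟩ := main m {σ} (by simpa using hσ)
    have heq : c ∘ σ.vmap = d ∘ σ.vmap := by
      funext b
      exact (hd2 (σ.vmap b) (hmax _ ⟨b, rfl⟩)).symm
    rw [Entry.Sat, heq]
    exact hd1 σ (Finset.mem_singleton_self σ)
  · obtain ⟨d, hd⟩ := hfs {σ} (by simpa using hσ)
    have heq : c ∘ σ.vmap = d ∘ σ.vmap := by
      funext b
      exact absurd ⟨b⟩ hα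
    rw [Entry.Sat, heq]
    exact hd σ (Finset.mem_singleton_self σ)

open scoped Classical in
/-- The entry expressing satisfiability of the `(s, u)` independence pattern. -/
noncomputable def entryOf {k nx : ℕ} {ny : Fin k → ℕ}
    (φ : L.Formula (Fin nx ⊕ ((ℓ : Fin k) × Fin (ny ℓ)))) (ι : Type u)
    (s u : Finset (Fin k → ι)) :
    Entry L (((ℓ : Fin k) × Fin (ny ℓ)) × ι) where
  α := {η // η ∈ s} × ((ℓ : Fin k) × Fin (ny ℓ))
  fin := by infer_instance
  φ := Formula.iExs (Fin nx) (Formula.relabel Sum.swap (listConj ((s.attach.toList).map fun η =>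
        (if η.1 ∈ u then (φ.relabel (Sum.map id fun p => ((η, p) : {η // η ∈ s} × _)))
          else (φ.relabel (Sum.map id fun p => ((η, p) : {η // η ∈ s} × _))).not))))
  vmap := fun w => (w.2, w.1.1 w.2.1)

theorem entryOf_sat {k nx : ℕ} {ny : Fin k → ℕ}
    (φ : L.Formula (Fin nx ⊕ ((ℓ : Fin k) × Fin (ny ℓ)))) (ι : Type u)
    (s u : Finset (Fin k → ι)) (c : (((ℓ : Fin k) × Fin (ny ℓ)) × ι) → M) :
    (entryOf φ ι s u).Sat (M := M) c ↔
      ∃ x : Fin nx → M, ∀ η ∈ s,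
        ((φ.Realize (Sum.elim x fun p => c (p, η p.1))) ↔ η ∈ u) := by
  classical
  simp only [Entry.Sat, entryOf]
  rw [Formula.realize_iExs]
  simp only [Formula.realize_relabel]
  show (∃ i, Formula.Realize _ fun a => Sum.elim (c ∘ fun w : ({η // η ∈ s} × ((ℓ : Fin k) × Fin (ny ℓ))) =>
    (w.2, w.1.1 w.2.1)) i (Sum.swap a)) ↔ _
  constructor
  · rintro ⟨i, hi⟩
    rw [realize_listConj] at hi
    refine ⟨i, fun η hη => ?_⟩
    have h := hi _ (List.mem_map.mpr ⟨⟨η, hη⟩, by simp, rfl⟩)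
    have hval : ∀ (i : Fin nx → M),
        ((fun a => Sum.elim (c ∘ fun w : ({η // η ∈ s} × ((ℓ : Fin k) × Fin (ny ℓ))) =>
            (w.2, w.1.1 w.2.1)) i (Sum.swap a)) ∘
          (Sum.map id fun p => (((⟨η, hη⟩ : {η // η ∈ s}), p) :
            {η // η ∈ s} × ((ℓ : Fin k) × Fin (ny ℓ))))) =
        Sum.elim i (fun p => c (p, η p.1)) := by
      intro i; funext z; cases z <;> rfl
    by_cases hu : η ∈ u
    · rw [if_pos hu, Formula.realize_relabel, hval] at h
      simp [hu, h]
    · rw [if_neg hu, Formula.realize_not, Formula.realize_relabel, hval] at h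
      simp [hu, h]
  · rintro ⟨x, hx⟩
    refine ⟨x, ?_⟩
    rw [realize_listConj]
    intro ψ hψ
    obtain ⟨η, -, rfl⟩ := List.mem_map.mp hψ
    have hval :
        ((fun a => Sum.elim (c ∘ fun w : ({η // η ∈ s} × ((ℓ : Fin k) × Fin (ny ℓ))) =>
            (w.2, w.1.1 w.2.1)) x (Sum.swap a)) ∘
          (Sum.map id fun p => ((η, p) :
            {η // η ∈ s} × ((ℓ : Fin k) × Fin (ny ℓ))))) =
        Sum.elim x (fun p => c (p, η.1 p.1)) := by
      funext z; cases z <;> rfl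
    by_cases hu : η.1 ∈ u
    · rw [if_pos hu, Formula.realize_relabel, hval]
      exact (hx η.1 η.2).mpr hu
    · rw [if_neg hu, Formula.realize_not, Formula.realize_relabel, hval]
      exact fun hr => hu ((hx η.1 η.2).mp hr)

end ObsAux

/-- Observation 2.7(4) of [Sh:886]: in the definition of a `k`-independent formula one may
restrict to increasing index functions: `φ` is `k`-independent provided that for every `n`
there are tuples `ā_{ℓ,m}` (`m < n`, `ℓ < k`) such that
`⟨φ(x̄, ā_{0,η(0)}, …, ā_{k-1,η(k-1)}) : η ∈ inc_k(n)⟩` is independent. -/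
theorem observation_nd17_4
    {L : FirstOrder.Language.{u, u}} {M : Type u} [L.Structure M]
    (κbar : Cardinal.{u}) (hκinacc : κbar.IsInaccessible) (hκT : theoryCard L < κbar)
    (hκsat : Saturated L M κbar)
    (k nx : ℕ) (ny : Fin k → ℕ)
    (φ : L.Formula (Fin nx ⊕ ((ℓ : Fin k) × Fin (ny ℓ))))
    (hinc : ∀ n : ℕ, ∃ a : (ℓ : Fin k) → Fin n → Fin (ny ℓ) → M,
      ∀ (u : Set {η : Fin k → Fin n // StrictMono η})
        (s : Finset {η : Fin k → Fin n // StrictMono η}),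
        ∃ x : Fin nx → M,
          ∀ η ∈ s, ((φ.Realize (Sum.elim x fun p => a p.1 (η.val p.1) p.2)) ↔ η ∈ u)) :
    FormulaKIndep M κbar k nx ny φ := by
  classical
  -- Step A: the finite version with arbitrary (not necessarily increasing) index functions.
  have lemA : ∀ n : ℕ, ∃ A : (ℓ : Fin k) → Fin n → Fin (ny ℓ) → M,
      ∀ (u : Set (Fin k → Fin n)) (s : Finset (Fin k → Fin n)),
        ∃ x : Fin nx → M,
          ∀ η ∈ s, ((φ.Realize (Sum.elim x fun p => A p.1 (η p.1) p.2)) ↔ η ∈ u) := by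
    intro n
    obtain ⟨a, ha⟩ := hinc (k * n)
    have hbound : ∀ (ℓ : Fin k) (m : Fin n), (ℓ : ℕ) * n + (m : ℕ) < k * n := by
      intro ℓ m
      calc (ℓ : ℕ) * n + (m : ℕ) < (ℓ : ℕ) * n + n := Nat.add_lt_add_left m.isLt _
        _ = ((ℓ : ℕ) + 1) * n := (Nat.succ_mul _ _).symm
        _ ≤ k * n := Nat.mul_le_mul_right n ℓ.isLt
    have hmono : ∀ η : Fin k → Fin n,
        StrictMono (fun ℓ : Fin k => (⟨(ℓ : ℕ) * n + (η ℓ : ℕ), hbound ℓ (η ℓ)⟩ : Fin (k * n))) := by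
      intro η ℓ₁ ℓ₂ hlt
      have h1 : (ℓ₁ : ℕ) * n + (η ℓ₁ : ℕ) < ((ℓ₁ : ℕ) + 1) * n := by
        rw [Nat.succ_mul]
        exact Nat.add_lt_add_left (η ℓ₁).isLt _
      have h2 : ((ℓ₁ : ℕ) + 1) * n ≤ (ℓ₂ : ℕ) * n :=
        Nat.mul_le_mul_right n (Nat.succ_le_of_lt hlt)
      have : (ℓ₁ : ℕ) * n + (η ℓ₁ : ℕ) < (ℓ₂ : ℕ) * n + (η ℓ₂ : ℕ) :=
        lt_of_lt_of_le (lt_of_lt_of_le h1 h2) (Nat.le_add_right _ _)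
      exact this
    set emb : (Fin k → Fin n) → {η' : Fin k → Fin (k * n) // StrictMono η'} :=
      fun η => ⟨fun ℓ : Fin k => ⟨(ℓ : ℕ) * n + (η ℓ : ℕ), hbound ℓ (η ℓ)⟩, hmono η⟩ with hemb
    have hinj : Function.Injective emb := by
      intro η₁ η₂ h
      funext ℓ
      have hc := congrFun (congrArg Subtype.val h) ℓ
      rw [hemb] at hc
      simp only [Fin.mk.injEq] at hc
      exact Fin.ext (by omega)
    refine ⟨fun ℓ m j => a ℓ ⟨(ℓ : ℕ) * n + (m : ℕ), hbound ℓ m⟩ j, ?_⟩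
    intro u s
    obtain ⟨x, hx⟩ := ha {η' | ∃ η ∈ u, emb η = η'} (s.image emb)
    refine ⟨x, fun η hη => ?_⟩
    have h1 := hx (emb η) (Finset.mem_image_of_mem _ hη)
    refine Iff.trans ?_ (Iff.trans h1 ?_)
    · exact Iff.of_eq rfl
    · constructor
      · rintro ⟨η₂, hη₂, he⟩
        have : η₂ = η := hinj he
        rwa [this] at hη₂
      · intro hu
        exact ⟨η, hu, rfl⟩
  intro ι hι
  by_cases hk0 : k = 0
  · -- degenerate case: there is a unique index function
    subst hk0
    refine ⟨fun ℓ => @finZeroElim (fun ℓ => ι → Fin (ny ℓ) → M) ℓ, ?_⟩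
    intro u s
    obtain ⟨A, hA⟩ := lemA 1
    obtain ⟨x, hx⟩ := hA {η' | (fun j : Fin 0 => j.elim0 : Fin 0 → ι) ∈ u}
      (s.image fun _ => (fun j : Fin 0 => j.elim0 : Fin 0 → Fin 1))
    refine ⟨x, fun η hη => ?_⟩
    have h1 := hx (fun j : Fin 0 => j.elim0) (Finset.mem_image_of_mem _ hη)
    have hηeq : η = fun j : Fin 0 => j.elim0 := funext fun j => j.elim0
    have hval : (Sum.elim x fun p : (ℓ : Fin 0) × Fin (ny ℓ) =>
          A p.1 ((fun j : Fin 0 => j.elim0) p.1) p.2) =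
        (Sum.elim x fun p : (ℓ : Fin 0) × Fin (ny ℓ) =>
          (fun ℓ : Fin 0 => @finZeroElim (fun ℓ => ι → Fin (ny ℓ) → M) ℓ) p.1
            ((fun j : Fin 0 => (j.elim0 : ι)) p.1) p.2) := by
      funext z
      rcases z with z | p
      · rfl
      · exact p.1.elim0
    rw [hval] at h1
    rw [hηeq]
    exact h1
  · have hkpos : 0 < k := Nat.pos_of_ne_zero hk0
    by_cases hM : Nonempty M
    · haveI := hM
      have hV : #((((ℓ : Fin k) × Fin (ny ℓ)) × ι : Type u)) < κbar := by
        have h1 : #((((ℓ : Fin k) × Fin (ny ℓ)) × ι : Type u)) =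
            Cardinal.lift.{u, 0} #((ℓ : Fin k) × Fin (ny ℓ)) * Cardinal.lift.{0, u} #ι :=
          Cardinal.mk_prod _ _
        rw [Cardinal.lift_uzero] at h1
        have h2 : Cardinal.lift.{u, 0} #((ℓ : Fin k) × Fin (ny ℓ)) < ℵ₀ := by
          rw [← Cardinal.lift_aleph0.{u, 0}, Cardinal.lift_lt]
          exact Cardinal.mk_lt_aleph0_iff.mpr inferInstance
        rw [h1]
        exact Cardinal.mul_lt_of_lt hκinacc.1.le (h2.trans hκinacc.1) hι
      have hfs : ∀ t : Finset (Entry L (((ℓ : Fin k) × Fin (ny ℓ)) × ι)),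
          ↑t ⊆ {e : Entry L (((ℓ : Fin k) × Fin (ny ℓ)) × ι) |
            ∃ s u : Finset (Fin k → ι), e = entryOf φ ι s u} →
          ∃ d : (((ℓ : Fin k) × Fin (ny ℓ)) × ι) → M, ∀ σ ∈ t, σ.Sat (M := M) d := by
        intro t ht
        have hch : ∀ e : {x // x ∈ t}, ∃ su : Finset (Fin k → ι) × Finset (Fin k → ι),
            e.1 = entryOf φ ι su.1 su.2 := by
          intro e
          obtain ⟨s, u, h⟩ := ht e.2
          exact ⟨(s, u), h⟩
        choose su hsu using hch
        set I₀ : Finset ι := t.attach.biUnion fun e =>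
          (su e).1.biUnion fun η => Finset.image η Finset.univ with hI₀
        obtain ⟨A, hA⟩ := lemA (I₀.card + 1)
        set τ : ι → Fin (I₀.card + 1) := fun i =>
          if h : i ∈ I₀ then (I₀.equivFin ⟨i, h⟩).castSucc else Fin.last _ with hτ
        have hτI : ∀ i (h : i ∈ I₀), τ i = (I₀.equivFin ⟨i, h⟩).castSucc := fun i h => dif_pos h
        have hτinj : ∀ i₁, i₁ ∈ I₀ → ∀ i₂, i₂ ∈ I₀ → τ i₁ = τ i₂ → i₁ = i₂ := by
          intro i₁ h₁ i₂ h₂ h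
          rw [hτI i₁ h₁, hτI i₂ h₂] at h
          have h' := Fin.castSucc_injective _ h
          have h'' := I₀.equivFin.injective h'
          exact congrArg Subtype.val h''
        have hIη : ∀ (e : {x // x ∈ t}) (η), η ∈ (su e).1 → ∀ ℓ : Fin k, η ℓ ∈ I₀ := by
          intro e η hη ℓ
          rw [hI₀]
          refine Finset.mem_biUnion.mpr ⟨e, Finset.mem_attach _ _, ?_⟩
          exact Finset.mem_biUnion.mpr ⟨η, hη, Finset.mem_image.mpr ⟨ℓ, Finset.mem_univ _, rfl⟩⟩
        refine ⟨fun w => A w.1.1 (τ w.2) w.1.2, ?_⟩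
        intro σ hσ
        rw [show σ = entryOf φ ι (su ⟨σ, hσ⟩).1 (su ⟨σ, hσ⟩).2 from hsu ⟨σ, hσ⟩, entryOf_sat]
        obtain ⟨x, hx⟩ := hA
          (↑(((su ⟨σ, hσ⟩).1 ∩ (su ⟨σ, hσ⟩).2).image fun η => τ ∘ η) :
            Set (Fin k → Fin (I₀.card + 1)))
          ((su ⟨σ, hσ⟩).1.image fun η => τ ∘ η)
        refine ⟨x, fun η hη => ?_⟩
        have h1 := hx (τ ∘ η) (Finset.mem_image_of_mem _ hη)
        refine Iff.trans (Iff.of_eq rfl) (h1.trans ?_)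
        rw [Finset.mem_coe, Finset.mem_image]
        constructor
        · rintro ⟨η₂, hη₂, he⟩
          rw [Finset.mem_inter] at hη₂
          have hee : η₂ = η := by
            funext ℓ
            exact hτinj _ (hIη ⟨σ, hσ⟩ η₂ hη₂.1 ℓ) _ (hIη ⟨σ, hσ⟩ η hη ℓ) (congrFun he ℓ)
          rw [← hee]
          exact hη₂.2
        · intro hu
          exact ⟨η, Finset.mem_inter.mpr ⟨hη, hu⟩, rfl⟩
      obtain ⟨cc, hcc⟩ := realize_entries κbar hκsat hV
        {e : Entry L (((ℓ : Fin k) × Fin (ny ℓ)) × ι) |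
          ∃ s u : Finset (Fin k → ι), e = entryOf φ ι s u} hfs
      refine ⟨fun ℓ i j => cc (⟨ℓ, j⟩, i), ?_⟩
      intro u s
      obtain ⟨x, hx⟩ := (entryOf_sat φ ι s (s.filter (· ∈ u)) cc).1
        (hcc _ ⟨s, s.filter (· ∈ u), rfl⟩)
      refine ⟨x, fun η hη => ?_⟩
      have h1 := hx η hη
      rw [Finset.mem_filter] at h1
      refine Iff.trans (Iff.of_eq rfl) (h1.trans ?_)
      exact ⟨fun h => h.2, fun h => ⟨hη, h⟩⟩
    · haveI : IsEmpty M := not_nonempty_iff.mp hM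
      exfalso
      obtain ⟨a1, -⟩ := hinc 1
      have hny : ∀ ℓ : Fin k, ny ℓ = 0 := by
        intro ℓ
        by_contra hne
        exact IsEmpty.false (a1 ℓ 0 ⟨0, Nat.pos_of_ne_zero hne⟩)
      obtain ⟨a2, ha2⟩ := hinc (k + 1)
      have hmono1 : StrictMono (Fin.castSucc : Fin k → Fin (k + 1)) := Fin.strictMono_castSucc
      have hmono2 : StrictMono (Fin.succ : Fin k → Fin (k + 1)) := Fin.strictMono_succ
      obtain ⟨x, hx⟩ := ha2 {⟨Fin.castSucc, hmono1⟩}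
        {⟨Fin.castSucc, hmono1⟩, ⟨Fin.succ, hmono2⟩}
      have h1 := hx ⟨Fin.castSucc, hmono1⟩ (by simp)
      have h2 := hx ⟨Fin.succ, hmono2⟩ (by simp)
      have hnev : (⟨Fin.succ, hmono2⟩ : {η : Fin k → Fin (k + 1) // StrictMono η}) ≠
          ⟨Fin.castSucc, hmono1⟩ := by
        intro h
        have h0 := congrFun (congrArg Subtype.val h) ⟨0, hkpos⟩
        rw [Fin.ext_iff] at h0
        simp at h0
      have hveq : (Sum.elim x fun p : (ℓ : Fin k) × Fin (ny ℓ) =>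
            a2 p.1 (Fin.castSucc p.1) p.2) =
          (Sum.elim x fun p : (ℓ : Fin k) × Fin (ny ℓ) => a2 p.1 (Fin.succ p.1) p.2) := by
        funext z
        rcases z with z | p
        · rfl
        · exact ((hny p.1) ▸ p.2).elim0
      rw [Set.mem_singleton_iff] at h1 h2
      have hr : φ.Realize (Sum.elim x fun p : (ℓ : Fin k) × Fin (ny ℓ) =>
          a2 p.1 (Fin.succ p.1) p.2) := by
        rw [← hveq]
        exact h1.mpr rfl
      exact hnev (h2.mp hr)

end Paper886
end
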